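/- arXiv:2203.05261 — 8 statements merged into one kernel-verified Lean document; each statement's English description precedes it below -/
import Mathlib

section
/- Let d ≥ 1, let f : ℝ^d → ℝ be an affine function (f(x) = aᵀx + b for some a ∈ ℝ^d, b ∈ ℝ), let v_1, …, v_{d+1} ∈ ℝ^d be affinely independent, and let s = conv(v_1, …, v_{d+1}) be the corresponding d-simplex. Then for every integer p ≥ 0, ∫_s f(x)^p dx = vol(s) · C(p+d, d)^{-1} · Σ_{k ∈ ℕ^{d+1}, k_1+⋯+k_{d+1} = p} f(v_1)^{k_1} ⋯ f(v_{d+1})^{k_{d+1}}, where C(p+d, d) is the binomial coefficient. -/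
open MeasureTheory

section Aux
open Finset


def cornerSet (n : ℕ) (r : ℝ) : Set (Fin n → ℝ) := {t | (∀ i, 0 ≤ t i) ∧ ∑ i, t i ≤ r}

lemma isClosed_cornerSet (n : ℕ) (r : ℝ) : IsClosed (cornerSet n r) := by
  have h1 : IsClosed {t : Fin n → ℝ | ∀ i, 0 ≤ t i} := by
    have : {t : Fin n → ℝ | ∀ i, 0 ≤ t i} = ⋂ i, {t | 0 ≤ t i} := by
      ext t; simp [Set.mem_iInter]
    rw [this]
    exact isClosed_iInter fun i => isClosed_le continuous_const (continuous_apply i)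
  have h2 : IsClosed {t : Fin n → ℝ | ∑ i, t i ≤ r} :=
    isClosed_le (by continuity) continuous_const
  exact h1.inter h2

lemma isCompact_cornerSet (n : ℕ) (r : ℝ) : IsCompact (cornerSet n r) := by
  refine IsCompact.of_isClosed_subset (isCompact_Icc (a := (0 : Fin n → ℝ)) (b := fun _ => r))
    (isClosed_cornerSet n r) ?_
  rintro t ⟨h1, h2⟩
  constructor
  · intro i; exact h1 i
  · intro i
    calc t i ≤ ∑ j, t j := Finset.single_le_sum (fun j _ => h1 j) (Finset.mem_univ i)
    _ ≤ r := h2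

lemma measurableSet_cornerSet (n : ℕ) (r : ℝ) : MeasurableSet (cornerSet n r) :=
  (isClosed_cornerSet n r).measurableSet


lemma beta_interval (j m : ℕ) :
    ∫ t in (0:ℝ)..1, t ^ j * (1 - t) ^ m
      = (j.factorial * m.factorial : ℝ) / (j + m + 1).factorial := by
  induction j generalizing m with
  | zero =>
    simp only [pow_zero, one_mul]
    have : ∫ t in (0:ℝ)..1, (1 - t) ^ m = ∫ t in (0:ℝ)..1, t ^ m := by
      have := intervalIntegral.integral_comp_sub_left (a := (0:ℝ)) (b := 1)
        (fun t => t ^ m) 1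
      simpa using this
    rw [this, integral_pow]
    have h0 : ((0:ℕ) + m + 1).factorial = (m+1) * m.factorial := by
      simp [Nat.factorial_succ]
    rw [h0]
    have hz : (0:ℝ) ^ (m+1) = 0 := zero_pow (Nat.succ_ne_zero m)
    rw [one_pow, hz]
    push_cast
    rw [div_eq_div_iff (by positivity) (by positivity)]
    simp [Nat.factorial]
    ring
  | succ j ih =>
    have hu : ∀ x ∈ Set.uIcc (0:ℝ) 1, HasDerivAt (fun t : ℝ => t ^ (j+1))
        (((j:ℝ)+1) * x ^ j) x := by
      intro x _
      simpa using (hasDerivAt_pow (j+1) x)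
    have hv : ∀ x ∈ Set.uIcc (0:ℝ) 1, HasDerivAt
        (fun t : ℝ => -(1 - t) ^ (m+1) / ((m:ℝ)+1)) ((1 - x) ^ m) x := by
      intro x _
      have h1 : HasDerivAt (fun t : ℝ => (1 - t)) (-1) x := by
        simpa using ((hasDerivAt_id x).const_sub 1)
      have h2 : HasDerivAt (fun t : ℝ => (1 - t) ^ (m+1))
          (((m:ℝ)+1) * (1 - x) ^ m * (-1)) x := by
        exact (HasDerivAt.pow h1 (m+1) |>.congr_deriv (by push_cast; ring))
      have h3 := (h2.neg.div_const ((m:ℝ)+1))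
      refine h3.congr_deriv ?_
      have : ((m:ℝ)+1) ≠ 0 := by positivity
      rw [div_eq_iff this]; ring
  -- ∫ u * v' = u b v b - u a v a - ∫ u' v
    have key := intervalIntegral.integral_mul_deriv_eq_deriv_mul hu hv
      (by apply Continuous.intervalIntegrable; continuity)
      (by apply Continuous.intervalIntegrable; continuity)
    have h4 : ∫ t in (0:ℝ)..1, t ^ (j+1) * (1 - t) ^ m
        = ((j:ℝ)+1) / ((m:ℝ)+1) * ∫ t in (0:ℝ)..1, t ^ j * (1 - t) ^ (m+1) := by
      rw [key, ← intervalIntegral.integral_const_mul]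
      have hz1 : (0:ℝ) ^ (j+1) = 0 := zero_pow (Nat.succ_ne_zero j)
      have hz2 : (1 - (1:ℝ)) ^ (m+1) = 0 := by norm_num
      rw [show (1:ℝ) ^ (j+1) * (-(1 - 1) ^ (m+1) / ((m:ℝ)+1))
          - (0:ℝ) ^ (j+1) * (-(1 - 0) ^ (m+1) / ((m:ℝ)+1)) = 0 by
        rw [hz1, hz2]; ring]
      rw [zero_sub, ← intervalIntegral.integral_neg]
      apply intervalIntegral.integral_congr
      intro x _
      have : ((m:ℝ)+1) ≠ 0 := by positivity
      field_simp
    rw [h4, ih (m+1)]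
    have e1 : ((m:ℝ)+1) ≠ 0 := by positivity
    have e2 : ((j + (m+1) + 1).factorial : ℝ) ≠ 0 := by positivity
    have e3 : ((j + 1 + m + 1).factorial : ℝ) ≠ 0 := by positivity
    rw [div_mul_div_comm]
    rw [div_eq_div_iff (by positivity) (by positivity)]
    have hfac1 : ((j+1).factorial : ℝ) = ((j:ℝ)+1) * j.factorial := by
      rw [Nat.factorial_succ]; push_cast; ring
    have hfac2 : ((m+1).factorial : ℝ) = ((m:ℝ)+1) * m.factorial := by
      rw [Nat.factorial_succ]; push_cast; ring
    have hfac3 : (j + 1 + m + 1) = (j + (m+1) + 1) := by omega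
    rw [hfac1, hfac2, hfac3]
    ring


lemma sum_antidiagonalTuple_succ (m p : ℕ) (c : Fin (m+1) → ℝ) :
    ∑ k ∈ Finset.Nat.antidiagonalTuple (m+1) p, ∏ i, c i ^ k i
      = ∑ j ∈ range (p+1), c 0 ^ j *
          ∑ k ∈ Finset.Nat.antidiagonalTuple m (p-j), ∏ i : Fin m, c i.succ ^ k i := by
  simp_rw [Finset.mul_sum]
  rw [Finset.sum_sigma' (σ := fun _ : ℕ => Fin m → ℕ) (range (p+1))
    (fun j => Finset.Nat.antidiagonalTuple m (p-j))
    (fun j k => c 0 ^ j * ∏ i : Fin m, c i.succ ^ k i)]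
  refine (Finset.sum_nbij'
    (fun (k : Fin (m+1) → ℕ) => (⟨k 0, fun i => k i.succ⟩ : Σ _j : ℕ, Fin m → ℕ))
    (fun (x : Σ _j : ℕ, Fin m → ℕ) => Fin.cons x.1 x.2) ?h1 ?h2 ?h3 ?h4 ?h5)
  case h1 =>
    rintro k hk
    rw [Finset.Nat.mem_antidiagonalTuple, Fin.sum_univ_succ] at hk
    refine Finset.mem_sigma.2 ⟨Finset.mem_range.2 ?_, Finset.Nat.mem_antidiagonalTuple.2 ?_⟩
    · show k 0 < p + 1
      omega
    · show ∑ i : Fin m, k i.succ = p - k 0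
      omega
  case h2 =>
    rintro ⟨j, k⟩ hx
    rw [Finset.mem_sigma, Finset.mem_range, Finset.Nat.mem_antidiagonalTuple] at hx
    rw [Finset.Nat.mem_antidiagonalTuple, Fin.sum_univ_succ]
    simp only [Fin.cons_zero, Fin.cons_succ]
    obtain ⟨h1, h2⟩ := hx
    dsimp only at h1 h2 ⊢
    omega
  case h3 =>
    intro k _
    exact Fin.cons_self_tail k
  case h4 =>
    rintro ⟨j, k⟩ _
    simp [Fin.cons_zero, Fin.cons_succ]
  case h5 =>
    intro k _
    rw [Fin.prod_univ_succ]




lemma cornerSet_smul_mem (n : ℕ) {r : ℝ} (hr : 0 < r) (u : Fin n → ℝ) :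
    (r • u) ∈ cornerSet n r ↔ u ∈ cornerSet n 1 := by
  simp only [cornerSet, Set.mem_setOf_eq, Pi.smul_apply, smul_eq_mul, ← Finset.mul_sum]
  constructor
  · rintro ⟨h1, h2⟩
    exact ⟨fun i => nonneg_of_mul_nonneg_right (h1 i) hr,
      by nlinarith [h2]⟩
  · rintro ⟨h1, h2⟩
    exact ⟨fun i => mul_nonneg hr.le (h1 i), by nlinarith⟩

lemma setIntegral_cornerSet_scaled (n : ℕ) {r : ℝ} (hr : 0 < r) (g : (Fin n → ℝ) → ℝ) :
    ∫ u in cornerSet n r, g u = r ^ n * ∫ u in cornerSet n 1, g (r • u) := by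
  have h1 : ∫ u in cornerSet n 1, g (r • u)
      = ∫ u, (cornerSet n r).indicator g (r • u) := by
    rw [← integral_indicator (measurableSet_cornerSet n 1)]
    congr 1; funext u
    by_cases h : u ∈ cornerSet n 1
    · rw [Set.indicator_of_mem h, Set.indicator_of_mem ((cornerSet_smul_mem n hr u).2 h)]
    · rw [Set.indicator_of_notMem h,
        Set.indicator_of_notMem (fun hc => h ((cornerSet_smul_mem n hr u).1 hc))]
  have h2 := Measure.integral_comp_smul (volume : Measure (Fin n → ℝ))
    ((cornerSet n r).indicator g) r
  rw [Module.finrank_fin_fun] at h2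
  rw [h1, h2, integral_indicator (measurableSet_cornerSet n r), smul_eq_mul,
    abs_of_nonneg (by positivity)]
  have : (r:ℝ) ^ n ≠ 0 := by positivity
  field_simp



lemma fubini_corner (n : ℕ) (G : ℝ × (Fin n → ℝ) → ℝ) (hG : Continuous G) :
    ∫ x in cornerSet (n+1) 1, G (x 0, fun j => x j.succ)
      = ∫ t in Set.Ioo (0:ℝ) 1, ∫ u in cornerSet n (1-t), G (t, u) := by
  set e := MeasurableEquiv.piFinSuccAbove (fun _ : Fin (n+1) => ℝ) 0 with he
  set S' : Set (ℝ × (Fin n → ℝ)) :=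
    {y | 0 ≤ y.1 ∧ (∀ i, 0 ≤ y.2 i) ∧ y.1 + ∑ i, y.2 i ≤ 1} with hS'
  have hclosed : IsClosed S' := by
    have h1 : IsClosed {y : ℝ × (Fin n → ℝ) | 0 ≤ y.1} :=
      isClosed_le continuous_const continuous_fst
    have h2 : IsClosed {y : ℝ × (Fin n → ℝ) | ∀ i, 0 ≤ y.2 i} := by
      have : {y : ℝ × (Fin n → ℝ) | ∀ i, 0 ≤ y.2 i} = ⋂ i, {y | 0 ≤ y.2 i} := by
        ext y; simp [Set.mem_iInter]
      rw [this]
      exact isClosed_iInter fun i =>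
        isClosed_le continuous_const ((continuous_apply i).comp continuous_snd)
    have h3 : IsClosed {y : ℝ × (Fin n → ℝ) | y.1 + ∑ i, y.2 i ≤ 1} :=
      isClosed_le (continuous_fst.add (continuous_finset_sum _ fun i _ =>
        (continuous_apply i).comp continuous_snd)) continuous_const
    have : S' = ({y : ℝ × (Fin n → ℝ) | 0 ≤ y.1} ∩ {y | ∀ i, 0 ≤ y.2 i})
        ∩ {y | y.1 + ∑ i, y.2 i ≤ 1} := by
      rw [hS']; ext y; simp only [Set.mem_setOf_eq, Set.mem_inter_iff]; tauto
    rw [this]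
    exact (h1.inter h2).inter h3
  have hcompact : IsCompact S' := by
    refine IsCompact.of_isClosed_subset (isCompact_Icc
      (a := ((0:ℝ), (0 : Fin n → ℝ))) (b := ((1:ℝ), fun _ => (1:ℝ)))) hclosed ?_
    rintro ⟨t, u⟩ ⟨h1, h2, h3⟩
    have h1' : (0:ℝ) ≤ t := h1
    have h2' : ∀ i, 0 ≤ u i := h2
    have h3' : t + ∑ j, u j ≤ 1 := h3
    have hsum : ∀ i, u i ≤ ∑ j, u j := fun i =>
      Finset.single_le_sum (fun j _ => h2' j) (Finset.mem_univ i)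
    have hsum0 : 0 ≤ ∑ j, u j := Finset.sum_nonneg fun j _ => h2' j
    simp only [Set.mem_Icc, Prod.le_def, Pi.le_def]
    refine ⟨⟨h1', fun i => h2' i⟩, ?_, fun i => ?_⟩
    · show t ≤ 1; linarith
    · show u i ≤ 1; have := hsum i; linarith
  have himg : ⇑e '' cornerSet (n+1) 1 = S' := by
    rw [MeasurableEquiv.image_eq_preimage_symm]
    ext ⟨t, u⟩
    have hsymm : e.symm (t, u) = Fin.cons t u := by
      show (Fin.insertNthEquiv (fun _ => ℝ) 0) (t, u) = Fin.cons t u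
      rw [Fin.insertNthEquiv_zero]
      rfl
    simp only [Set.mem_preimage, MeasurableEquiv.coe_toEquiv_symm]
    rw [hsymm]
    simp only [cornerSet, Set.mem_setOf_eq, hS']
    constructor
    · rintro ⟨h1, h2⟩
      rw [Fin.sum_univ_succ] at h2
      simp only [Fin.cons_zero, Fin.cons_succ] at h1 h2
      exact ⟨h1 0, fun i => by simpa using h1 i.succ, by simpa using h2⟩
    · rintro ⟨h1, h2, h3⟩
      constructor
      · intro i
        refine Fin.cases ?_ ?_ i
        · simpa using h1
        · intro j; simpa using h2 j
      · rw [Fin.sum_univ_succ]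
        simpa using h3
  have hmp : MeasurePreserving e volume ((volume : Measure ℝ).prod (volume : Measure (Fin n → ℝ))) :=
    measurePreserving_piFinSuccAbove (fun _ : Fin (n+1) => (volume : Measure ℝ)) 0
  have step1 : ∫ x in cornerSet (n+1) 1, G (x 0, fun j => x j.succ)
      = ∫ y in S', G y ∂((volume : Measure ℝ).prod volume) := by
    rw [← himg, MeasurePreserving.setIntegral_image_emb hmp e.measurableEmbedding]
    apply setIntegral_congr_fun (measurableSet_cornerSet (n+1) 1)
    intro x _
    show G (x 0, fun j => x j.succ) = G (e x)
    have hex : e x = (x 0, fun j => x j.succ) := by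
      simp only [he, MeasurableEquiv.piFinSuccAbove_apply, Fin.insertNthEquiv,
        Equiv.coe_fn_symm_mk]
      exact Prod.ext rfl rfl
    rw [hex]
  rw [step1]
  have hint : IntegrableOn G S' ((volume : Measure ℝ).prod volume) :=
    hG.continuousOn.integrableOn_compact hcompact
  rw [← integral_indicator hclosed.measurableSet]
  rw [integral_prod _ ((integrable_indicator_iff hclosed.measurableSet).2 hint)]
  have inner_eq : ∀ t : ℝ, (∫ u, S'.indicator G (t, u))
      = Set.indicator (Set.Icc (0:ℝ) 1) (fun t => ∫ u in cornerSet n (1-t), G (t, u)) t := by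
    intro t
    by_cases ht : t ∈ Set.Icc (0:ℝ) 1
    · rw [Set.indicator_of_mem ht, ← integral_indicator (measurableSet_cornerSet n (1-t))]
      congr 1; funext u
      by_cases hu : u ∈ cornerSet n (1-t)
      · rw [Set.indicator_of_mem hu, Set.indicator_of_mem]
        exact ⟨ht.1, hu.1, by have := hu.2; simp only; linarith⟩
      · rw [Set.indicator_of_notMem hu, Set.indicator_of_notMem]
        rintro ⟨h1, h2, h3⟩
        exact hu ⟨h2, by simp only at h3; linarith⟩
    · rw [Set.indicator_of_notMem ht]
      have : ∀ u, S'.indicator G (t, u) = 0 := by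
        intro u
        rw [Set.indicator_of_notMem]
        rintro ⟨h1, h2, h3⟩
        have hsum0 : 0 ≤ ∑ j, u j := Finset.sum_nonneg fun j _ => h2 j
        simp only at h1 h3
        exact ht ⟨h1, by linarith⟩
      simp [this]
  simp_rw [inner_eq]
  rw [integral_indicator measurableSet_Icc, integral_Icc_eq_integral_Ioo]



lemma beta_Ioo (j m : ℕ) :
    ∫ t in Set.Ioo (0:ℝ) 1, t ^ j * (1 - t) ^ m
      = (j.factorial * m.factorial : ℝ) / (j + m + 1).factorial := by
  rw [← MeasureTheory.integral_Ioc_eq_integral_Ioo,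
    ← intervalIntegral.integral_of_le zero_le_one, beta_interval]

lemma alg_helper (C jf pjf D E S x P : ℝ) (hD : D ≠ 0) (hfac : C * jf * pjf = P) :
    C * x * (pjf / D * S) * (jf * D / E) = P / E * (x * S) := by
  have h : C * x * (pjf / D * S) * (jf * D / E) = (C * jf * pjf) * (x * S) * (D / D) / E := by
    ring
  rw [h, div_self hD, hfac]
  ring

theorem core_integral (n : ℕ) : ∀ (p : ℕ) (c : Fin (n+1) → ℝ),
    ∫ t in cornerSet n 1,
        ((∑ i : Fin n, c i.castSucc * t i) + c (Fin.last n) * (1 - ∑ i, t i)) ^ p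
      = (p.factorial : ℝ) / (p + n).factorial *
          ∑ k ∈ Finset.Nat.antidiagonalTuple (n+1) p, ∏ i, c i ^ k i := by
  induction n with
  | zero =>
    intro p c
    have hset : cornerSet 0 1 = Set.univ := by
      ext t
      simp [cornerSet]
    rw [hset, MeasureTheory.setIntegral_univ]
    simp only [Finset.univ_eq_empty, Finset.sum_empty, zero_add, sub_zero, mul_one]
    rw [MeasureTheory.integral_const]
    have hvol : (volume (Set.univ : Set (Fin 0 → ℝ))).toReal = 1 := by
      rw [MeasureTheory.volume_pi, MeasureTheory.Measure.pi_univ]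
      simp
    rw [measureReal_def, hvol, one_smul]
    rw [Finset.Nat.antidiagonalTuple_one]
    simp only [Finset.sum_singleton, Fin.prod_univ_one, Matrix.cons_val_zero, Nat.add_zero]
    rw [div_self (by positivity : ((p.factorial : ℝ)) ≠ 0), one_mul]
    rw [show (Fin.last 0) = 0 from rfl]
    simp [Fin.prod_univ_succ]
  | succ n ih =>
    intro p c
    set c' : Fin (n+1) → ℝ := fun i => c i.succ with hc'
    set G : ℝ × (Fin n → ℝ) → ℝ := fun y =>
      (c 0 * y.1 + ((∑ i : Fin n, c i.succ.castSucc * y.2 i)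
         + c (Fin.last (n+1)) * (1 - y.1 - ∑ i, y.2 i))) ^ p with hG
    set Hu : (Fin n → ℝ) → ℝ := fun u =>
      (∑ i : Fin n, c' i.castSucc * u i) + c' (Fin.last n) * (1 - ∑ i, u i) with hHu
    have hIH : ∀ q : ℕ, (∫ u in cornerSet n 1, Hu u ^ q)
        = (q.factorial : ℝ) / (q + n).factorial *
            ∑ k ∈ Finset.Nat.antidiagonalTuple (n+1) q, ∏ i, c' i ^ k i :=
      fun q => ih q c'
    have hHucont : Continuous Hu := by
      apply Continuous.add
      · exact continuous_finset_sum _ fun i _ => continuous_const.mul (continuous_apply i)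
      · exact continuous_const.mul (continuous_const.sub
          (continuous_finset_sum _ fun i _ => continuous_apply i))
    have hGcont : Continuous G := by
      apply Continuous.pow
      apply Continuous.add
      · exact continuous_const.mul continuous_fst
      · apply Continuous.add
        · exact continuous_finset_sum _ fun i _ =>
            continuous_const.mul ((continuous_apply i).comp continuous_snd)
        · exact continuous_const.mul ((continuous_const.sub continuous_fst).sub
            (continuous_finset_sum _ fun i _ => (continuous_apply i).comp continuous_snd))
    have eq0 : ∀ x : Fin (n+1) → ℝ, ((∑ i : Fin (n+1), c i.castSucc * x i)
        + c (Fin.last (n+1)) * (1 - ∑ i, x i)) ^ p = G (x 0, fun j => x j.succ) := by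
      intro x
      rw [hG]
      simp only
      rw [Fin.sum_univ_succ (f := fun i : Fin (n+1) => c i.castSucc * x i),
        Fin.sum_univ_succ (f := fun i : Fin (n+1) => x i), Fin.castSucc_zero]
      congr 1
      ring
    rw [setIntegral_congr_fun (measurableSet_cornerSet (n+1) 1) (fun x _ => eq0 x),
      fubini_corner n G hGcont]
    have inner : ∀ t ∈ Set.Ioo (0:ℝ) 1, (∫ u in cornerSet n (1-t), G (t, u))
        = ∑ j ∈ Finset.range (p+1),
            ((p.choose j : ℝ) * c 0 ^ j * (((p-j).factorial : ℝ) / ((p-j) + n).factorial *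
              ∑ k ∈ Finset.Nat.antidiagonalTuple (n+1) (p-j), ∏ i, c' i ^ k i))
            * (t ^ j * (1-t) ^ ((p - j) + n)) := by
      intro t ht
      have hr : 0 < 1 - t := by linarith [ht.2]
      rw [setIntegral_cornerSet_scaled n hr]
      have hGr : ∀ u : Fin n → ℝ, G (t, (1-t) • u)
          = ∑ j ∈ Finset.range (p+1),
              ((p.choose j : ℝ) * c 0 ^ j * t ^ j * (1-t) ^ (p - j)) * Hu u ^ (p - j) := by
        intro u
        have hbase : G (t, (1-t) • u) = (c 0 * t + (1-t) * Hu u) ^ p := by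
          rw [hG, hHu]
          simp only [Pi.smul_apply, smul_eq_mul]
          congr 1
          have h1 : ∀ i : Fin n, c i.succ.castSucc * ((1-t) * u i)
              = (1-t) * (c i.succ.castSucc * u i) := fun i => by ring
          simp_rw [h1, ← Finset.mul_sum]
          have h2 : ∀ i : Fin n, c' i.castSucc = c i.succ.castSucc := by
            intro i
            rw [hc']
            simp only
            rw [Fin.succ_castSucc]
          have h3 : c' (Fin.last n) = c (Fin.last (n+1)) := by
            rw [hc']
            simp only
            rw [Fin.succ_last]
          simp_rw [h2, h3]
          ring
        rw [hbase, add_pow]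
        apply Finset.sum_congr rfl
        intro j hj
        rw [mul_pow (1-t) (Hu u) (p - j)]
        ring
      simp_rw [hGr]
      rw [integral_finset_sum _ (fun j _ => ((show Continuous fun u => ((p.choose j : ℝ) * c 0 ^ j * t ^ j * (1-t) ^ (p - j)) * Hu u ^ (p - j) from continuous_const.mul
        (hHucont.pow _)).continuousOn.integrableOn_compact (isCompact_cornerSet n 1)))]
      simp_rw [integral_const_mul]
      rw [Finset.mul_sum]
      apply Finset.sum_congr rfl
      intro j hj
      rw [hIH (p - j)]
      have hpow : (1-t) ^ ((p - j) + n) = (1-t) ^ (p - j) * (1-t) ^ n := by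
        rw [← pow_add]
      rw [hpow]
      ring
    rw [setIntegral_congr_fun measurableSet_Ioo inner]
    have hi : ∀ (K : ℝ) (j m : ℕ), IntegrableOn
        (fun t : ℝ => K * (t ^ j * (1-t) ^ m)) (Set.Ioo (0:ℝ) 1) volume := by
      intro K j m
      apply IntegrableOn.mono_set _ Set.Ioo_subset_Icc_self
      apply ContinuousOn.integrableOn_compact (isCompact_Icc (a := (0:ℝ)) (b := 1))
      apply Continuous.continuousOn
      exact continuous_const.mul ((continuous_pow j).mul
        ((continuous_const.sub continuous_id).pow m))
    rw [integral_finset_sum _ (fun j _ => hi _ j _)]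
    simp_rw [integral_const_mul]
    have hbeta : ∀ j ∈ Finset.range (p+1),
        (∫ t in Set.Ioo (0:ℝ) 1, t ^ j * (1-t) ^ ((p - j) + n))
          = ((j.factorial : ℝ) * ((p-j) + n).factorial) / (p + (n+1)).factorial := by
      intro j hj
      rw [beta_Ioo j ((p-j) + n)]
      have hj' : j ≤ p := by
        rw [Finset.mem_range] at hj
        omega
      have heq : j + ((p-j) + n) + 1 = p + (n+1) := by omega
      rw [heq]
    rw [Finset.sum_congr rfl (fun j hj => by rw [hbeta j hj])]
    rw [sum_antidiagonalTuple_succ (n+1) p c, Finset.mul_sum]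
    apply Finset.sum_congr rfl
    intro j hj
    have hj' : j ≤ p := by
      rw [Finset.mem_range] at hj
      omega
    have hfac : (p.choose j : ℝ) * j.factorial * (p - j).factorial = p.factorial := by
      rw [← Nat.cast_mul, ← Nat.cast_mul, Nat.choose_mul_factorial_mul_factorial hj']
    have hcsucc : ∀ i : Fin (n+1), c i.succ = c' i := fun i => rfl
    simp_rw [hcsucc]
    exact alg_helper _ _ _ _ _ _ _ _ (by positivity) hfac



lemma cornerSet_eq_convexHull (d : ℕ) : cornerSet d 1
    = convexHull ℝ (insert 0 (Set.range fun i : Fin d => Pi.single i (1:ℝ))) := by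
  refine Set.Subset.antisymm ?_ (convexHull_min ?_ ?_)
  · intro t ht
    have hsum : ∑ i : Fin (d+1), (Fin.snoc (fun i => t i) (1 - ∑ i, t i) : Fin (d+1) → ℝ) i •
        (Fin.snoc (fun i => Pi.single i (1:ℝ)) 0 : Fin (d+1) → Fin d → ℝ) i = t := by
      rw [Fin.sum_univ_castSucc]
      simp only [Fin.snoc_castSucc, Fin.snoc_last, smul_zero, add_zero]
      have hsingle : ∀ i : Fin d, t i • (Pi.single i (1:ℝ) : Fin d → ℝ)
          = (Pi.single i (t i) : Fin d → ℝ) := by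
        intro i
        ext j
        by_cases h : j = i <;> simp [Pi.single_apply, h]
      simp_rw [hsingle]
      exact Finset.univ_sum_single t
    rw [← hsum]
    refine Convex.sum_mem (convex_convexHull ℝ _) ?_ ?_ ?_
    · intro i _
      refine Fin.lastCases ?_ ?_ i
      · rw [Fin.snoc_last]
        have h2 := ht.2
        linarith
      · intro j
        rw [Fin.snoc_castSucc]
        exact ht.1 j
    · rw [Fin.sum_univ_castSucc]
      simp only [Fin.snoc_castSucc, Fin.snoc_last]
      ring
    · intro i _
      refine Fin.lastCases ?_ ?_ i
      · rw [Fin.snoc_last]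
        exact subset_convexHull ℝ _ (Set.mem_insert 0 _)
      · intro j
        rw [Fin.snoc_castSucc]
        exact subset_convexHull ℝ _ (Set.mem_insert_of_mem _ ⟨j, rfl⟩)
  · rintro x (rfl | ⟨i, rfl⟩)
    · exact ⟨fun i => le_refl 0, by simp⟩
    · constructor
      · intro j
        by_cases h : j = i <;> simp [Pi.single_apply, h]
      · simp
  · intro x hx y hy α β hα hβ hαβ
    constructor
    · intro i
      have h1 := hx.1 i
      have h2 := hy.1 i
      simp only [Pi.add_apply, Pi.smul_apply, smul_eq_mul]
      nlinarith
    · simp only [Pi.add_apply, Pi.smul_apply, smul_eq_mul, Finset.sum_add_distrib,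
        ← Finset.mul_sum]
      nlinarith [hx.2, hy.2]


end Aux

open Finset in
/-- integral of the `p`-th power of an affine function over a `d`-simplex. -/
theorem integral_affine_pow_simplex (d : ℕ) (hd : 1 ≤ d)
    (a : Fin d → ℝ) (b : ℝ) (f : (Fin d → ℝ) → ℝ)
    (hf : ∀ x, f x = (∑ i, a i * x i) + b)
    (v : Fin (d + 1) → (Fin d → ℝ)) (hv : AffineIndependent ℝ v)
    (p : ℕ) :
    ∫ x in convexHull ℝ (Set.range v), (f x) ^ p =
      (volume (convexHull ℝ (Set.range v))).toReal * (((p + d).choose d : ℝ))⁻¹ *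
        ∑ k ∈ Finset.Nat.antidiagonalTuple (d + 1) p, ∏ i, (f (v i)) ^ (k i) := by
  classical
  set w : Fin d → (Fin d → ℝ) := fun i => v i.castSucc - v (Fin.last d) with hw
  have li : LinearIndependent ℝ w := by
    have h := (affineIndependent_iff_linearIndependent_vsub ℝ v (Fin.last d)).mp hv
    exact h.comp
      (fun i : Fin d =>
        (⟨i.castSucc, (Fin.castSucc_lt_last i).ne⟩ : {x : Fin (d+1) // x ≠ Fin.last d}))
      (fun i j hij => Fin.castSucc_injective d (congrArg Subtype.val hij))
  set Mlin : (Fin d → ℝ) →ₗ[ℝ] (Fin d → ℝ) :=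
    ∑ i, LinearMap.smulRight (LinearMap.proj i) (w i) with hMlin
  have hM : ∀ u : Fin d → ℝ, Mlin u = ∑ i, u i • w i := by
    intro u
    rw [hMlin]
    simp [LinearMap.sum_apply, LinearMap.smulRight_apply, LinearMap.proj_apply]
  have Minj : Function.Injective Mlin := by
    have hli := Fintype.linearIndependent_iff.mp li
    intro x y hxy
    have hz : Mlin (x - y) = 0 := by rw [map_sub, hxy, sub_self]
    rw [hM] at hz
    have h2 := hli (x - y) hz
    funext i
    have h3 := h2 i
    rw [Pi.sub_apply] at h3
    linarith
  set Mclm : (Fin d → ℝ) →L[ℝ] (Fin d → ℝ) := LinearMap.toContinuousLinearMap Mlin with hMclm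
  set T : (Fin d → ℝ) → (Fin d → ℝ) := fun u => Mlin u + v (Fin.last d) with hT
  have hTd : ∀ x ∈ cornerSet d 1, HasFDerivWithinAt T Mclm (cornerSet d 1) x := by
    intro x _
    exact ((Mclm.hasFDerivAt (x := x)).add_const (v (Fin.last d))).hasFDerivWithinAt
  have hinj : Set.InjOn T (cornerSet d 1) := by
    intro x _ y _ hxy
    exact Minj (add_right_cancel hxy)
  have h0 : T 0 = v (Fin.last d) := by
    rw [hT]
    simp only [map_zero, zero_add]
  have h1 : ∀ i : Fin d, T (Pi.single i 1) = v i.castSucc := by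
    intro i
    rw [hT]
    simp only
    rw [hM, Finset.sum_eq_single i
      (fun k _ hk => by rw [Pi.single_eq_of_ne hk, zero_smul])
      (fun h => absurd (Finset.mem_univ i) h)]
    rw [Pi.single_eq_same, one_smul, hw]
    simp only
    rw [sub_add_cancel]
  have himg : T '' cornerSet d 1 = convexHull ℝ (Set.range v) := by
    have hrange : Set.range v
        = insert (v (Fin.last d)) (Set.range fun i : Fin d => v i.castSucc) := by
      ext y
      constructor
      · rintro ⟨k, rfl⟩
        refine Fin.lastCases ?_ ?_ k
        · exact Set.mem_insert _ _
        · intro j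
          exact Set.mem_insert_of_mem _ ⟨j, rfl⟩
      · rintro (rfl | ⟨j, rfl⟩)
        · exact ⟨Fin.last d, rfl⟩
        · exact ⟨j.castSucc, rfl⟩
    have Taffh : ∀ q : Fin d → ℝ, T q = Mlin (q -ᵥ 0) +ᵥ T 0 := by
      intro q
      rw [hT]
      simp [vsub_eq_sub]
    set Taff : (Fin d → ℝ) →ᵃ[ℝ] (Fin d → ℝ) := AffineMap.mk' T Mlin 0 Taffh with hTaffd
    have hcoe : ⇑Taff = T := rfl
    rw [cornerSet_eq_convexHull d, ← hcoe, AffineMap.image_convexHull, hrange]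
    congr 1
    rw [Set.image_insert_eq, hcoe, h0, ← Set.range_comp]
    have hco : (T ∘ fun i : Fin d => (Pi.single i 1 : Fin d → ℝ))
        = fun i : Fin d => v i.castSucc := by
      funext i
      exact h1 i
    rw [hco]
  set c : Fin (d+1) → ℝ := fun i => f (v i) with hc
  set φL : (Fin d → ℝ) →ₗ[ℝ] ℝ := ∑ j, (a j) • LinearMap.proj j with hφ
  have hφap : ∀ x : Fin d → ℝ, φL x = ∑ j, a j * x j := by
    intro x
    rw [hφ]
    simp [LinearMap.sum_apply, LinearMap.smul_apply, LinearMap.proj_apply]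
  have hfφ : ∀ x, f x = φL x + b := fun x => by rw [hf x, hφap]
  have hφv : ∀ k, φL (v k) = c k - b := by
    intro k
    rw [hc]
    simp only
    rw [hfφ (v k)]
    ring
  have hfT : ∀ u : Fin d → ℝ, f (T u)
      = (∑ i : Fin d, c i.castSucc * u i) + c (Fin.last d) * (1 - ∑ i, u i) := by
    intro u
    have e1 : f (T u) = φL (Mlin u) + φL (v (Fin.last d)) + b := by
      rw [hfφ, hT]
      simp only [map_add]
    have e2 : φL (Mlin u) = ∑ i : Fin d, u i * (c i.castSucc - c (Fin.last d)) := by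
      rw [hM, map_sum]
      apply Finset.sum_congr rfl
      intro i _
      rw [_root_.map_smul φL (u i) (w i), hw]
      simp only
      rw [map_sub, hφv, hφv, smul_eq_mul]
      ring
    have e4 : ∑ i : Fin d, u i * (c i.castSucc - c (Fin.last d))
        = (∑ i : Fin d, c i.castSucc * u i) - (∑ i : Fin d, u i) * c (Fin.last d) := by
      rw [Finset.sum_mul, ← Finset.sum_sub_distrib]
      apply Finset.sum_congr rfl
      intro i _
      ring
    rw [e1, e2, e4, hφv]
    ring
  have cov : ∀ g : (Fin d → ℝ) → ℝ, (∫ x in T '' cornerSet d 1, g x)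
      = |Mclm.det| * ∫ u in cornerSet d 1, g (T u) := by
    intro g
    rw [integral_image_eq_integral_abs_det_fderiv_smul volume (measurableSet_cornerSet d 1)
      hTd hinj g]
    simp_rw [smul_eq_mul]
    rw [MeasureTheory.integral_const_mul]
  have hvolT : (volume (T '' cornerSet d 1)).toReal
      = |Mclm.det| * (volume (cornerSet d 1)).toReal := by
    have h := cov (fun _ => (1:ℝ))
    rw [setIntegral_const, setIntegral_const] at h
    simpa [measureReal_def] using h
  have hvolc : (volume (cornerSet d 1)).toReal = ((d.factorial : ℝ))⁻¹ := by
    have h := core_integral d 0 c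
    simp only [pow_zero] at h
    rw [setIntegral_const, Finset.Nat.antidiagonalTuple_zero_right] at h
    simpa [measureReal_def] using h
  rw [show convexHull ℝ (Set.range v) = T '' cornerSet d 1 from himg.symm]
  rw [cov (fun x => f x ^ p)]
  rw [setIntegral_congr_fun (measurableSet_cornerSet d 1) (fun u _ => by rw [hfT u])]
  rw [core_integral d p c, hvolT, hvolc]
  have hch : ((p+d).choose d : ℝ) * d.factorial * p.factorial = (p+d).factorial := by
    have h := Nat.choose_mul_factorial_mul_factorial (Nat.le_add_left d p)
    rw [Nat.add_sub_cancel] at h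
    exact_mod_cast h
  have h1 : ((p+d).factorial : ℝ) ≠ 0 := by positivity
  have h2 : (d.factorial : ℝ) ≠ 0 := by positivity
  have h3 : (((p+d).choose d : ℝ)) ≠ 0 := by
    exact_mod_cast (Nat.choose_pos (Nat.le_add_left d p)).ne'
  have hfrac : (p.factorial : ℝ) / (p+d).factorial
      = (d.factorial : ℝ)⁻¹ * (((p+d).choose d : ℝ))⁻¹ := by
    field_simp
    linear_combination hch
  rw [hfrac]
  ring
end

section
/- Let d ≥ 1, let f : ℝ^d → ℝ be an affine function, let v_1, …, v_{d+1} ∈ ℝ^d be affinely independent with d-simplex s = conv(v_1, …, v_{d+1}), and let f_s = (f(v_1), …, f(v_{d+1})) ∈ ℝ^{d+1}. Then ∫_s f(x)² dx = (vol(s) / ((d+1)(d+2))) · f_sᵀ P f_s, where P = 1_{d+1} + I_{d+1}. -/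
open MeasureTheory
/-- The corner simplex `{y | y ≥ 0, ∑ y ≤ r}` in `ℝ^d`. -/
def cornerS (d : ℕ) (r : ℝ) : Set (Fin d → ℝ) := {y | (∀ i, 0 ≤ y i) ∧ ∑ i, y i ≤ r}

theorem cornerS_closed (d : ℕ) (r : ℝ) : IsClosed (cornerS d r) := by
  have : cornerS d r = (⋂ i, {y : Fin d → ℝ | 0 ≤ y i}) ∩ {y | ∑ i, y i ≤ r} := by
    ext y; simp [cornerS]
  rw [this]
  exact (isClosed_iInter fun i => isClosed_le continuous_const (continuous_apply i)).inter
    (isClosed_le (continuous_finset_sum _ fun i _ => continuous_apply i) continuous_const)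

theorem cornerS_measurable (d : ℕ) (r : ℝ) : MeasurableSet (cornerS d r) :=
  (cornerS_closed d r).measurableSet

theorem cornerS_empty {d : ℕ} {r : ℝ} (hr : r < 0) : cornerS d r = ∅ := by
  ext y
  simp only [cornerS, Set.mem_setOf_eq, Set.mem_empty_iff_false, iff_false, not_and]
  intro h0
  have : (0:ℝ) ≤ ∑ i, y i := Finset.sum_nonneg fun i _ => h0 i
  intro h; linarith

theorem cornerS_compact (d : ℕ) (r : ℝ) : IsCompact (cornerS d r) := by
  rcases lt_or_ge r 0 with hr | hr
  · rw [cornerS_empty hr]; exact isCompact_empty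
  · refine IsCompact.of_isClosed_subset (isCompact_univ_pi fun _ : Fin d => isCompact_Icc (a := (0:ℝ)) (b := r))
      (cornerS_closed d r) ?_
    rintro y ⟨h0, hs⟩ 
    refine Set.mem_univ_pi.2 fun i => ⟨h0 i, ?_⟩
    calc y i ≤ ∑ j, y j := Finset.single_le_sum (fun j _ => h0 j) (Finset.mem_univ i)
    _ ≤ r := hs

theorem cornerS_vanish {d : ℕ} {r : ℝ} (hr : r < 0) (h : (Fin d → ℝ) → ℝ) :
    ∫ z in cornerS d r, h z = 0 := by
  rw [cornerS_empty hr, Measure.restrict_empty, integral_zero_measure]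

theorem cornerS_integrableOn {d : ℕ} {r : ℝ} {h : (Fin d → ℝ) → ℝ} (hh : Continuous h) :
    IntegrableOn h (cornerS d r) :=
  hh.continuousOn.integrableOn_compact (cornerS_compact d r)

theorem cornerS_slice (d : ℕ) (r : ℝ) (i : Fin (d+1))
    (G : (Fin (d+1) → ℝ) → ℝ) (g : ℝ → ℝ) (hg : Continuous g)
    (h : (Fin d → ℝ) → ℝ) (hh : Continuous h)
    (hGfact : ∀ y, G y = g (y i) * h (fun j => y (i.succAbove j))) :
    (∫ y in cornerS (d+1) r, G y) =
      ∫ t in Set.Ici (0:ℝ), g t * ∫ z in cornerS d (r - t), h z := by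
  classical
  set e := MeasurableEquiv.piFinSuccAbove (fun _ : Fin (d+1) => ℝ) i with he
  have hMP : MeasurePreserving e.symm volume volume :=
    (volume_preserving_piFinSuccAbove (fun _ : Fin (d+1) => ℝ) i).symm
  have hmemb : ∀ p : ℝ × (Fin d → ℝ),
      e.symm p ∈ cornerS (d+1) r ↔ 0 ≤ p.1 ∧ p.2 ∈ cornerS d (r - p.1) := by
    rintro ⟨t, z⟩
    simp only [he, MeasurableEquiv.piFinSuccAbove_symm_apply, Fin.insertNthEquiv, Equiv.coe_fn_mk, cornerS, Set.mem_setOf_eq]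
    rw [Fin.forall_iff_succAbove i, Fin.sum_univ_succAbove _ i]
    simp only [Fin.insertNth_apply_same, Fin.insertNth_apply_succAbove]
    constructor
    · rintro ⟨⟨h1, h2⟩, h3⟩; exact ⟨h1, ⟨h2, by linarith⟩⟩
    · rintro ⟨h1, h2, h3⟩; exact ⟨⟨h1, h2⟩, by linarith⟩
  have hGeval : ∀ p : ℝ × (Fin d → ℝ), G (e.symm p) = g p.1 * h p.2 := by
    intro p
    rw [hGfact]
    simp only [he, MeasurableEquiv.piFinSuccAbove_symm_apply, Fin.insertNthEquiv, Equiv.coe_fn_mk,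
      Fin.insertNth_apply_same, Fin.insertNth_apply_succAbove]
  -- the transported set
  set T : Set (ℝ × (Fin d → ℝ)) := (fun p => e.symm p) ⁻¹' (cornerS (d+1) r) with hT
  have hTc : Continuous (fun p : ℝ × (Fin d → ℝ) => (e.symm p : Fin (d+1) → ℝ)) := by
    simp only [he, MeasurableEquiv.piFinSuccAbove_symm_apply, Fin.insertNthEquiv, Equiv.coe_fn_mk]
    refine continuous_pi ?_
    rw [Fin.forall_iff_succAbove i]
    constructor
    · simpa using continuous_fst
    · intro j; simpa [Function.comp_def] using (continuous_apply j).comp continuous_snd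
  have hTclosed : IsClosed T := (cornerS_closed _ _).preimage hTc
  have hTcompact : IsCompact T := by
    refine IsCompact.of_isClosed_subset
      ((isCompact_Icc (a := (0:ℝ)) (b := r)).prod (cornerS_compact d r)) hTclosed ?_
    rintro ⟨t, z⟩ hp
    rw [Set.mem_preimage, hmemb] at hp
    obtain ⟨h1, h2, h3⟩ := hp
    have hz : (0:ℝ) ≤ ∑ j, z j := Finset.sum_nonneg fun j _ => h2 j
    exact ⟨⟨h1, by linarith⟩, h2, by linarith⟩
  have hfun : (fun p => Set.indicator (cornerS (d+1) r) G (e.symm p)) =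
      T.indicator (fun p : ℝ × (Fin d → ℝ) => g p.1 * h p.2) := by
    funext p
    by_cases hp : e.symm p ∈ cornerS (d+1) r
    · rw [Set.indicator_of_mem hp, Set.indicator_of_mem (by exact hp), hGeval]
    · rw [Set.indicator_of_notMem hp, Set.indicator_of_notMem (by exact hp)]
  have hint : Integrable (T.indicator (fun p : ℝ × (Fin d → ℝ) => g p.1 * h p.2)) := by
    rw [integrable_indicator_iff hTclosed.measurableSet]
    exact ((hg.comp continuous_fst).mul (hh.comp continuous_snd)).continuousOn.integrableOn_compact
      hTcompact
  calc (∫ y in cornerS (d+1) r, G y)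
      = ∫ y, Set.indicator (cornerS (d+1) r) G y := (integral_indicator (cornerS_measurable _ _)).symm
    _ = ∫ p, Set.indicator (cornerS (d+1) r) G (e.symm p) :=
        (hMP.integral_comp e.symm.measurableEmbedding _).symm
    _ = ∫ p, T.indicator (fun p : ℝ × (Fin d → ℝ) => g p.1 * h p.2) p := by rw [hfun]
    _ = ∫ t, ∫ z, T.indicator (fun p : ℝ × (Fin d → ℝ) => g p.1 * h p.2) (t, z) := by
        rw [Measure.volume_eq_prod] at hint ⊢; exact integral_prod _ hint
    _ = ∫ t in Set.Ici (0:ℝ), g t * ∫ z in cornerS d (r - t), h z := by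
        rw [← integral_indicator measurableSet_Ici]
        congr 1; funext t
        by_cases ht : 0 ≤ t
        · rw [Set.indicator_of_mem (Set.mem_Ici.2 ht)]
          have hzfun : ∀ z, T.indicator (fun p : ℝ × (Fin d → ℝ) => g p.1 * h p.2) (t, z)
              = g t * (cornerS d (r - t)).indicator h z := by
            intro z
            by_cases hz : z ∈ cornerS d (r - t)
            · rw [Set.indicator_of_mem (by rw [hT, Set.mem_preimage, hmemb]; exact ⟨ht, hz⟩),
                Set.indicator_of_mem hz]
            · rw [Set.indicator_of_notMem (by rw [hT, Set.mem_preimage, hmemb]; exact fun hc => hz hc.2),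
                Set.indicator_of_notMem hz, mul_zero]
          simp_rw [hzfun]
          rw [integral_const_mul, integral_indicator (cornerS_measurable _ _)]
        · have hzfun : ∀ z, T.indicator (fun p : ℝ × (Fin d → ℝ) => g p.1 * h p.2) (t, z) = 0 := by
            intro z
            rw [Set.indicator_of_notMem (by rw [hT, Set.mem_preimage, hmemb]; exact fun hc => ht hc.1)]
          simp_rw [hzfun]
          rw [Set.indicator_of_notMem (by simpa using ht), integral_zero]


theorem beta0 (r : ℝ) (n : ℕ) : ∫ t in (0:ℝ)..r, (r - t)^n = r^(n+1)/(n+1) := by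
  rw [intervalIntegral.integral_comp_sub_left (fun u => u^n) r]
  simp [integral_pow]

theorem beta1 (r : ℝ) (n : ℕ) :
    ∫ t in (0:ℝ)..r, t * (r - t)^n = r^(n+2)/((n+1)*(n+2)) := by
  have h : ∀ t : ℝ, t * (r - t)^n = (fun u => (r - u) * u ^ n) (r - t) := by
    intro t; simp only []; ring_nf
  simp_rw [h]
  rw [intervalIntegral.integral_comp_sub_left (fun u => (r - u) * u^n) r]
  simp only [sub_zero, sub_self]
  have h2 : ∀ u : ℝ, (r - u) * u ^ n = r * u^n - u^(n+1) := by intro u; ring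
  simp_rw [h2]
  rw [intervalIntegral.integral_sub ((intervalIntegrable_const (c := r)).mul_continuousOn (Continuous.continuousOn (by continuity))) (intervalIntegral.intervalIntegrable_pow _), intervalIntegral.integral_const_mul, integral_pow, integral_pow]
  have h3 : (n:ℝ)+1 ≠ 0 := by positivity
  have h4 : (n:ℝ)+2 ≠ 0 := by positivity
  field_simp
  push_cast
  ring

theorem beta2 (r : ℝ) (n : ℕ) :
    ∫ t in (0:ℝ)..r, t^2 * (r - t)^n = 2*r^(n+3)/((n+1)*(n+2)*(n+3)) := by
  have h : ∀ t : ℝ, t^2 * (r - t)^n = (fun u => (r - u)^2 * u ^ n) (r - t) := by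
    intro t; simp only []; ring_nf
  simp_rw [h]
  rw [intervalIntegral.integral_comp_sub_left (fun u => (r - u)^2 * u^n) r]
  simp only [sub_zero, sub_self]
  have h2 : ∀ u : ℝ, (r - u)^2 * u ^ n = r^2 * u^n - (2*r) * u^(n+1) + u^(n+2) := by intro u; ring
  simp_rw [h2]
  have i1 : IntervalIntegrable (fun u : ℝ => r^2 * u^n) volume 0 r := (Continuous.intervalIntegrable (by continuity) 0 r) 
  have i2 : IntervalIntegrable (fun u : ℝ => (2*r) * u^(n+1)) volume 0 r := (Continuous.intervalIntegrable (by continuity) 0 r)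
  have i3 : IntervalIntegrable (fun u : ℝ => u^(n+2)) volume 0 r := (Continuous.intervalIntegrable (by continuity) 0 r)
  rw [intervalIntegral.integral_add (i1.sub i2) i3, intervalIntegral.integral_sub i1 i2,
    intervalIntegral.integral_const_mul, intervalIntegral.integral_const_mul,
    integral_pow, integral_pow, integral_pow]
  have h3 : (n:ℝ)+1 ≠ 0 := by positivity
  have h4 : (n:ℝ)+2 ≠ 0 := by positivity
  have h5 : (n:ℝ)+3 ≠ 0 := by positivity
  field_simp
  push_cast
  ring


theorem ici_to_interval (r : ℝ) (hr : 0 ≤ r) (F G : ℝ → ℝ)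
    (h1 : ∀ t, 0 < t → t ≤ r → F t = G t) (h2 : ∀ t, r < t → F t = 0) :
    (∫ t in Set.Ici (0:ℝ), F t) = ∫ t in (0:ℝ)..r, G t := by
  rw [integral_Ici_eq_integral_Ioi, intervalIntegral.integral_of_le hr,
    ← integral_indicator measurableSet_Ioi, ← integral_indicator measurableSet_Ioc]
  congr 1; funext t
  by_cases ht : 0 < t
  · by_cases htr : t ≤ r
    · rw [Set.indicator_of_mem (Set.mem_Ioi.2 ht), Set.indicator_of_mem (Set.mem_Ioc.2 ⟨ht, htr⟩), h1 t ht htr]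
    · rw [Set.indicator_of_mem (Set.mem_Ioi.2 ht),
        Set.indicator_of_notMem (fun hc => htr (Set.mem_Ioc.1 hc).2), h2 t (lt_of_not_ge htr)]
  · rw [Set.indicator_of_notMem (by simpa using ht),
      Set.indicator_of_notMem (fun hc => ht (Set.mem_Ioc.1 hc).1)]

theorem factR_ne (k : ℕ) : (Nat.factorial k : ℝ) ≠ 0 :=
  Nat.cast_ne_zero.2 (Nat.factorial_ne_zero k)

theorem cornerS_moments : ∀ (d : ℕ) (r : ℝ), 0 ≤ r →
    ((∫ y in cornerS d r, (1:ℝ)) = r ^ d / d.factorial) ∧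
    (∀ i : Fin d, (∫ y in cornerS d r, y i) = r ^ (d+1) / (d+1).factorial) ∧
    (∀ i j : Fin d, (∫ y in cornerS d r, y i * y j) =
      (if i = j then 2 else 1) * (r ^ (d+2) / (d+2).factorial)) := by
  intro d
  induction d with
  | zero =>
    intro r hr
    have huniv : cornerS 0 r = Set.univ := by
      ext y
      simp only [cornerS, Set.mem_setOf_eq, Set.mem_univ, iff_true]
      exact ⟨fun i => i.elim0, by simpa using hr⟩
    refine ⟨?_, fun i => i.elim0, fun i => i.elim0⟩
    rw [huniv, Measure.restrict_univ, integral_const, volume_pi, measureReal_def, Measure.pi_univ]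
    simp
  | succ d IH =>
    intro r hr
    constructor
    · calc (∫ y in cornerS (d+1) r, (1:ℝ))
          = ∫ t in Set.Ici (0:ℝ), (1:ℝ) * ∫ z in cornerS d (r - t), (1:ℝ) := by
            simpa using cornerS_slice d r 0 (fun _ => (1:ℝ)) (fun _ => (1:ℝ)) continuous_const
              (fun _ => (1:ℝ)) continuous_const (fun y => by simp)
        _ = ∫ t in (0:ℝ)..r, (r - t)^d / d.factorial :=
            ici_to_interval r hr _ _
              (fun t h1 h2 => by rw [(IH (r-t) (by linarith)).1, one_mul])
              (fun t h2 => by rw [cornerS_vanish (by linarith), mul_zero])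
        _ = r ^ (d+1) / (d+1).factorial := by
            simp only [Nat.factorial_succ]
            rw [intervalIntegral.integral_div, beta0]
            push_cast
            have h1 : (d:ℝ)+1 ≠ 0 := by positivity
            field_simp
    refine ⟨fun i => ?_, fun i j => ?_⟩
    · calc (∫ y in cornerS (d+1) r, y i)
          = ∫ t in Set.Ici (0:ℝ), t * ∫ z in cornerS d (r - t), (1:ℝ) := by
            simpa using cornerS_slice d r i (fun y => y i) (fun t => t) continuous_id
              (fun _ => (1:ℝ)) continuous_const (fun y => by simp)
        _ = ∫ t in (0:ℝ)..r, t * (r - t)^d / d.factorial :=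
            ici_to_interval r hr _ _
              (fun t h1 h2 => by rw [(IH (r-t) (by linarith)).1]; ring)
              (fun t h2 => by rw [cornerS_vanish (by linarith), mul_zero])
        _ = r ^ (d+1+1) / (d+1+1).factorial := by
            simp_rw [mul_div_assoc, ← mul_div_assoc]
            simp only [Nat.factorial_succ]
            rw [intervalIntegral.integral_div, beta1]
            push_cast
            have h1 : (d:ℝ)+1 ≠ 0 := by positivity
            have h2 : (d:ℝ)+2 ≠ 0 := by positivity
            field_simp
            try ring
            try tauto
    · by_cases hij : i = j
      · subst hij
        calc (∫ y in cornerS (d+1) r, y i * y i)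
            = ∫ t in Set.Ici (0:ℝ), t^2 * ∫ z in cornerS d (r - t), (1:ℝ) := by
              simpa using cornerS_slice d r i (fun y => y i * y i) (fun t => t^2) (by continuity)
                (fun _ => (1:ℝ)) continuous_const (fun y => by simp; ring)
          _ = ∫ t in (0:ℝ)..r, t^2 * (r - t)^d / d.factorial :=
              ici_to_interval r hr _ _
                (fun t h1 h2 => by rw [(IH (r-t) (by linarith)).1]; ring)
                (fun t h2 => by rw [cornerS_vanish (by linarith), mul_zero])
          _ = (if i = i then 2 else 1) * (r ^ (d+1+2) / (d+1+2).factorial) := by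
              simp_rw [mul_div_assoc, ← mul_div_assoc]
              simp only [Nat.factorial_succ, if_pos rfl]
              rw [intervalIntegral.integral_div, beta2]
              push_cast
              have h1 : (d:ℝ)+1 ≠ 0 := by positivity
              have h2 : (d:ℝ)+2 ≠ 0 := by positivity
              have h3 : (d:ℝ)+3 ≠ 0 := by positivity
              field_simp
              try ring
              try tauto
      · obtain ⟨j', hj'⟩ := Fin.exists_succAbove_eq (Ne.symm hij)
        calc (∫ y in cornerS (d+1) r, y i * y j)
            = ∫ t in Set.Ici (0:ℝ), t * ∫ z in cornerS d (r - t), z j' := by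
              simpa using cornerS_slice d r i (fun y => y i * y j) (fun t => t) continuous_id
                (fun z => z j') (continuous_apply j') (fun y => by simp [hj'])
          _ = ∫ t in (0:ℝ)..r, t * (r - t)^(d+1) / (d+1).factorial :=
              ici_to_interval r hr _ _
                (fun t h1 h2 => by rw [(IH (r-t) (by linarith)).2.1 j']; ring)
                (fun t h2 => by rw [cornerS_vanish (by linarith), mul_zero])
          _ = (if i = j then 2 else 1) * (r ^ (d+1+2) / (d+1+2).factorial) := by
              simp_rw [mul_div_assoc, ← mul_div_assoc]
              simp only [Nat.factorial_succ, if_neg hij]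
              rw [intervalIntegral.integral_div, beta1]
              push_cast
              have h1 : (d:ℝ)+1 ≠ 0 := by positivity
              have h2 : (d:ℝ)+2 ≠ 0 := by positivity
              have h3 : (d:ℝ)+3 ≠ 0 := by positivity
              have hf := factR_ne d
              field_simp
              try ring
              try tauto

theorem cornerS_convex (d : ℕ) (r : ℝ) : Convex ℝ (cornerS d r) := by
  have h : cornerS d r = (⋂ i, {y : Fin d → ℝ | 0 ≤ y i}) ∩ {y | ∑ i, y i ≤ r} := by
    ext y; simp [cornerS]
  rw [h]
  refine Convex.inter (convex_iInter fun i => ?_) ?_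
  · exact convex_halfSpace_ge ⟨fun a b => rfl, fun c a => rfl⟩ 0
  · exact convex_halfSpace_le
      ⟨fun a b => by simp [Finset.sum_add_distrib],
       fun c a => by simp [Finset.mul_sum]⟩ r

section Geom
variable {d : ℕ} (v : Fin (d + 1) → (Fin d → ℝ))

noncomputable def Lmap : (Fin d → ℝ) →ₗ[ℝ] (Fin d → ℝ) where
  toFun := fun y => ∑ j, y j • (v j.castSucc - v (Fin.last d))
  map_add' := by intro y z; simp [add_smul, Finset.sum_add_distrib]
  map_smul' := by intro c y; simp [smul_smul, Finset.smul_sum]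

theorem Lmap_inj (hv : AffineIndependent ℝ v) : Function.Injective (Lmap v) := by
  have hli0 := (affineIndependent_iff_linearIndependent_vsub ℝ v (Fin.last d)).1 hv
  have hinj : Function.Injective
      (fun j : Fin d => (⟨j.castSucc, (Fin.castSucc_lt_last j).ne⟩ : {x : Fin (d+1) // x ≠ Fin.last d})) := by
    intro j k h
    exact Fin.castSucc_injective d (Subtype.mk_eq_mk.1 h)
  have hli : LinearIndependent ℝ (fun j : Fin d => v j.castSucc - v (Fin.last d)) := by
    have := hli0.comp _ hinj
    simpa [vsub_eq_sub, Function.comp_def] using this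
  have h0 : ∀ y, Lmap v y = 0 → y = 0 := by
    intro y hy
    funext j
    exact Fintype.linearIndependent_iff.1 hli (fun j => y j) hy j
  intro y z h
  have : Lmap v (y - z) = 0 := by rw [map_sub, h, sub_self]
  have := h0 _ this
  rwa [sub_eq_zero] at this

theorem image_cornerS (hv : AffineIndependent ℝ v) :
    convexHull ℝ (Set.range v) = (fun y => v (Fin.last d) + Lmap v y) '' cornerS d 1 := by
  apply le_antisymm
  · apply convexHull_min
    · rintro _ ⟨k, rfl⟩
      induction k using Fin.lastCases with
      | last =>
        refine ⟨0, ⟨fun i => le_rfl, by simp⟩, ?_⟩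
        simp [Lmap]
      | cast j =>
        refine ⟨Pi.single j 1, ⟨fun i => by by_cases h : i = j <;> simp [Pi.single_apply, h], by simp⟩, ?_⟩
        show v (Fin.last d) + Lmap v (Pi.single j 1) = v j.castSucc
        have : Lmap v (Pi.single j 1) = v j.castSucc - v (Fin.last d) := by
          show (∑ j', Pi.single j 1 j' • (v j'.castSucc - v (Fin.last d))) = _
          rw [Finset.sum_eq_single j]
          · simp
          · intro k _ hk; simp [Pi.single_apply, hk]
          · intro h; exact absurd (Finset.mem_univ j) h
        rw [this]; abel
    · have h1 : Convex ℝ (Lmap v '' cornerS d 1) := (cornerS_convex d 1).linear_image _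
      have h2 := h1.translate (v (Fin.last d))
      have : (fun y => v (Fin.last d) + Lmap v y) '' cornerS d 1
          = (fun x => v (Fin.last d) + x) '' (Lmap v '' cornerS d 1) := by
        rw [Set.image_image]
      rw [this]; exact h2
  · rintro _ ⟨y, hy, rfl⟩
    have hw : ∀ k, 0 ≤ (Fin.snoc y (1 - ∑ j, y j) : Fin (d+1) → ℝ) k := by
      intro k
      induction k using Fin.lastCases with
      | last => rw [Fin.snoc_last]; linarith [hy.2]
      | cast j => rw [Fin.snoc_castSucc]; exact hy.1 j
    have hw1 : ∑ k, (Fin.snoc y (1 - ∑ j, y j) : Fin (d+1) → ℝ) k = 1 := by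
      rw [Fin.sum_univ_castSucc]
      simp only [Fin.snoc_castSucc, Fin.snoc_last]
      ring
    have hmem := Finset.centerMass_mem_convexHull Finset.univ
      (w := (Fin.snoc y (1 - ∑ j, y j) : Fin (d+1) → ℝ)) (fun k _ => hw k) (by rw [hw1]; norm_num)
      (fun k _ => Set.mem_range_self (f := v) k)
    rw [Finset.centerMass_eq_of_sum_1 _ _ hw1] at hmem
    convert hmem using 1
    rw [Fin.sum_univ_castSucc]
    simp only [Fin.snoc_castSucc, Fin.snoc_last]
    show v (Fin.last d) + (∑ j, y j • (v j.castSucc - v (Fin.last d))) = _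
    simp only [smul_sub, Finset.sum_sub_distrib, sub_smul, one_smul, ← Finset.sum_smul]
    abel
end Geom


theorem quad_sum' {n : ℕ} (c : Fin n → ℝ) :
    ∑ i, ∑ j, c i * (if i = j then 2 else 1) * c j = (∑ i, c i)^2 + ∑ i, (c i)^2 := by
  have h : ∀ i : Fin n, ∑ j, c i * (if i = j then 2 else 1) * c j
      = c i * (∑ j, c j) + (c i)^2 := by
    intro i
    have : ∀ j : Fin n, c i * (if i = j then 2 else 1) * c j
        = c i * c j + (if i = j then c i * c j else 0) := by
      intro j; split_ifs <;> ring
    simp_rw [this]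
    rw [Finset.sum_add_distrib, ← Finset.mul_sum, Finset.sum_ite_eq]
    simp [sq]
  simp_rw [h]
  rw [Finset.sum_add_distrib, ← Finset.sum_mul, sq]

theorem sum_mul_sum_expand {n : ℕ} (e : Fin n → ℝ) (m : ℝ) :
    ∑ j, ∑ k, (e j * e k) * ((if j = k then 2 else 1) * m)
      = ((∑ j, e j)^2 + ∑ j, (e j)^2) * m := by
  have h : ∀ j k : Fin n, (e j * e k) * ((if j = k then 2 else 1) * m)
      = (e j * (if j = k then 2 else 1) * e k) * m := by intro j k; ring
  simp_rw [h, ← Finset.sum_mul]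
  rw [quad_sum']

-- expansion of an affine function composed with the parametrization
theorem affine_comp {d : ℕ} (a : Fin d → ℝ) (b : ℝ) (f : (Fin d → ℝ) → ℝ)
    (hf : ∀ x, f x = (∑ i, a i * x i) + b) (v : Fin (d + 1) → (Fin d → ℝ)) (y : Fin d → ℝ) :
    f (v (Fin.last d) + ∑ j, y j • (v j.castSucc - v (Fin.last d)))
      = (∑ j, y j * (f (v j.castSucc) - f (v (Fin.last d)))) + f (v (Fin.last d)) := by
  simp only [hf]
  have hcoord : ∀ i, (v (Fin.last d) + ∑ j, y j • (v j.castSucc - v (Fin.last d))) i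
      = v (Fin.last d) i + ∑ j, y j * (v j.castSucc i - v (Fin.last d) i) := by
    intro i
    simp [Finset.sum_apply, smul_eq_mul]
  simp_rw [hcoord, mul_add, Finset.sum_add_distrib, Finset.mul_sum]
  rw [Finset.sum_comm]
  have hterm : ∀ j : Fin d, y j * ((∑ i, a i * v j.castSucc i + b) - (∑ i, a i * v (Fin.last d) i + b))
      = ∑ i, a i * (y j * (v j.castSucc i - v (Fin.last d) i)) := by
    intro j
    rw [add_sub_add_right_eq_sub, ← Finset.sum_sub_distrib, Finset.mul_sum]
    exact Finset.sum_congr rfl fun i _ => by ring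
  simp_rw [hterm]
  ring

/-- the squared-`L₂` integral of an affine function over a `d`-simplex is a
quadratic form in the vertex values with matrix `P = 1 + I`. -/
theorem integral_affine_sq_simplex (d : ℕ) (hd : 1 ≤ d)
    (a : Fin d → ℝ) (b : ℝ) (f : (Fin d → ℝ) → ℝ)
    (hf : ∀ x, f x = (∑ i, a i * x i) + b)
    (v : Fin (d + 1) → (Fin d → ℝ)) (hv : AffineIndependent ℝ v) :
    ∫ x in convexHull ℝ (Set.range v), (f x) ^ 2 =
      (volume (convexHull ℝ (Set.range v))).toReal / ((d + 1) * (d + 2)) *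
        ∑ i, ∑ j, f (v i) * (if i = j then 2 else 1) * f (v j) := by
  classical
  set cL := f (v (Fin.last d)) with hcL
  set ev : Fin d → ℝ := fun j => f (v j.castSucc) - f (v (Fin.last d)) with hev
  set L : (Fin d → ℝ) →ₗ[ℝ] (Fin d → ℝ) := Lmap v with hL
  set L' := LinearMap.toContinuousLinearMap L with hL'
  have hdet : L'.det = L.det := by rw [hL']; simp [ContinuousLinearMap.det, LinearMap.coe_toContinuousLinearMap]
  have hLinj : Function.Injective L := Lmap_inj v hv
  have himg := image_cornerS v hv
  rw [← hL] at himg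
  have hS1 : MeasurableSet (cornerS d 1) := cornerS_measurable d 1
  have hAinj : Set.InjOn (fun y => v (Fin.last d) + L y) (cornerS d 1) := by
    intro y _ z _ h
    exact hLinj (add_left_cancel h)
  have hCoV := integral_image_eq_integral_abs_det_fderiv_smul (μ := volume) hS1
    (f := fun y => v (Fin.last d) + L y) (f' := fun _ => L')
    (fun x _ => (L'.hasFDerivAt.const_add (v (Fin.last d))).hasFDerivWithinAt)
    hAinj (fun x => (f x)^2)
  -- volume of the simplex
  have hvolS : (volume (cornerS d 1)).toReal = 1 / d.factorial := by
    have h := (cornerS_moments d 1 zero_le_one).1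
    rwa [setIntegral_const, smul_eq_mul, mul_one, one_pow] at h
  have hvol : (volume ((fun y => v (Fin.last d) + L y) '' cornerS d 1)).toReal
      = |L.det| * (1 / d.factorial) := by
    have h1 : (fun y => v (Fin.last d) + L y) '' cornerS d 1
        = (fun x => v (Fin.last d) + x) '' (L '' cornerS d 1) := by rw [Set.image_image]
    rw [h1, Set.image_add_left, measure_preimage_add, Measure.addHaar_image_linearMap,
      ENNReal.toReal_mul, ENNReal.toReal_ofReal (abs_nonneg _), hvolS]
  -- rewrite the integral
  rw [himg, hCoV]
  have hAeval : ∀ y : Fin d → ℝ, f (v (Fin.last d) + L y) = (∑ j, y j * ev j) + cL := by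
    intro y
    have : v (Fin.last d) + L y
        = v (Fin.last d) + ∑ j, y j • (v j.castSucc - v (Fin.last d)) := rfl
    rw [this, affine_comp a b f hf v y]
  have hintrw : ∀ y : Fin d → ℝ, |(L').det| • (f (v (Fin.last d) + L y))^2
      = |L.det| • (((∑ j, ∑ k, (ev j * ev k) * (y j * y k))
          + ((∑ j, (2*cL*ev j) * y j) + cL^2))) := by
    intro y
    rw [hdet, hAeval]
    congr 1
    rw [add_sq, pow_two (∑ j, y j * ev j), Finset.sum_mul_sum]
    have e1 : ∀ j k : Fin d, (y j * ev j) * (y k * ev k) = (ev j * ev k) * (y j * y k) := by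
      intro j k; ring
    simp_rw [e1]
    have e2 : 2 * (∑ j, y j * ev j) * cL = ∑ j, (2*cL*ev j) * y j := by
      rw [mul_comm, mul_left_comm cL 2, Finset.mul_sum, Finset.mul_sum]
      exact Finset.sum_congr rfl fun j _ => by ring
    rw [e2]
    ring
  simp_rw [hintrw]
  rw [integral_smul, smul_eq_mul]
  -- integrability facts
  have int1 : ∀ j k : Fin d, IntegrableOn (fun y : Fin d → ℝ => (ev j * ev k) * (y j * y k))
      (cornerS d 1) := fun j k => cornerS_integrableOn
      (continuous_const.mul ((continuous_apply j).mul (continuous_apply k)))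
  have intG1 : IntegrableOn (fun y : Fin d → ℝ => ∑ j, ∑ k, (ev j * ev k) * (y j * y k))
      (cornerS d 1) := by
    apply cornerS_integrableOn
    exact continuous_finset_sum _ fun j _ => continuous_finset_sum _ fun k _ =>
      continuous_const.mul ((continuous_apply j).mul (continuous_apply k))
  have int2 : ∀ j : Fin d, IntegrableOn (fun y : Fin d → ℝ => (2*cL*ev j) * y j)
      (cornerS d 1) := fun j => cornerS_integrableOn (continuous_const.mul (continuous_apply j))
  have intG2 : IntegrableOn (fun y : Fin d → ℝ => ∑ j, (2*cL*ev j) * y j) (cornerS d 1) := by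
    apply cornerS_integrableOn
    exact continuous_finset_sum _ fun j _ => continuous_const.mul (continuous_apply j)
  have intG3 : IntegrableOn (fun _ : Fin d → ℝ => cL^2) (cornerS d 1) :=
    cornerS_integrableOn continuous_const
  have intG23 : IntegrableOn (fun y : Fin d → ℝ => (∑ j, (2*cL*ev j) * y j) + cL^2)
      (cornerS d 1) := intG2.add intG3
  rw [integral_add intG1 intG23]
  rw [integral_add intG2 intG3,
    integral_finset_sum _ (fun j _ => by
      apply cornerS_integrableOn
      exact continuous_finset_sum _ fun k _ =>
        continuous_const.mul ((continuous_apply j).mul (continuous_apply k)))]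
  simp_rw [integral_finset_sum _ (fun k (_ : k ∈ Finset.univ) => int1 _ k),
    integral_const_mul]
  simp_rw [(cornerS_moments d 1 zero_le_one).2.2]
  rw [integral_finset_sum _ (fun j _ => int2 j)]
  simp_rw [integral_const_mul, (cornerS_moments d 1 zero_le_one).2.1]
  rw [sum_mul_sum_expand, setIntegral_const, measureReal_def, hvolS, smul_eq_mul]
  rw [← Finset.sum_mul, ← Finset.mul_sum]
  -- now pure algebra
  rw [quad_sum']
  have hc : ∀ i : Fin (d+1), f (v i) = (Fin.snoc ev 0 : Fin (d+1) → ℝ) i + cL := by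
    intro i
    induction i using Fin.lastCases with
    | last => rw [Fin.snoc_last]; ring
    | cast j => rw [Fin.snoc_castSucc, hev]; ring
  simp_rw [hc]
  rw [hvol]
  rw [Fin.sum_univ_castSucc (f := fun i => (Fin.snoc ev 0 : Fin (d+1) → ℝ) i + cL),
    Fin.sum_univ_castSucc (f := fun i => ((Fin.snoc ev 0 : Fin (d+1) → ℝ) i + cL)^2)]
  simp only [Fin.snoc_castSucc, Fin.snoc_last, zero_add]
  rw [Finset.sum_add_distrib, Finset.sum_const, Finset.card_univ, Fintype.card_fin]
  have hsq : ∀ j : Fin d, (ev j + cL)^2 = (ev j)^2 + (2*cL) * ev j + cL^2 := fun j => by ring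
  simp_rw [hsq]
  rw [Finset.sum_add_distrib, Finset.sum_add_distrib, ← Finset.mul_sum,
    Finset.sum_const, Finset.card_univ, Fintype.card_fin]
  simp only [one_pow, nsmul_eq_mul]
  simp only [Nat.factorial_succ]
  push_cast
  have h1 : (d:ℝ)+1 ≠ 0 := by positivity
  have h2 : (d:ℝ)+2 ≠ 0 := by positivity
  have hfne : (d.factorial : ℝ) ≠ 0 := factR_ne d
  field_simp
  ring
end

section
/- Let d ≥ 1, let f, g : ℝ^d → ℂ be affine functions, let v_1, …, v_{d+1} ∈ ℝ^d be affinely independent with d-simplex s = conv(v_1, …, v_{d+1}), and set f_s = (f(v_1), …, f(v_{d+1})) ∈ ℂ^{d+1}, g_s = (g(v_1), …, g(v_{d+1})) ∈ ℂ^{d+1}. Then ∫_s conj(f(x)) g(x) dx = (vol(s) / ((d+1)(d+2))) · f_s^H P g_s, where P = 1_{d+1} + I_{d+1} and f_s^H is the conjugate transpose of f_s. -/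
open MeasureTheory

def corner (d : ℕ) : Set (Fin d → ℝ) := {x | (∀ i, 0 ≤ x i) ∧ ∑ i, x i ≤ 1}

lemma isClosed_corner (d : ℕ) : IsClosed (corner d) := by
  have h1 : IsClosed {x : Fin d → ℝ | ∀ i, 0 ≤ x i} := by
    have : {x : Fin d → ℝ | ∀ i, 0 ≤ x i} = ⋂ i, {x | 0 ≤ x i} := by ext x; simp
    rw [this]
    exact isClosed_iInter fun i => isClosed_le continuous_const (continuous_apply i)
  have h2 : IsClosed {x : Fin d → ℝ | ∑ i, x i ≤ 1} :=
    isClosed_le (by fun_prop) continuous_const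
  exact h1.inter h2

lemma corner_subset_Icc (d : ℕ) : corner d ⊆ Set.Icc 0 1 := by
  rintro x ⟨h0, h1⟩
  refine ⟨fun i => h0 i, fun i => ?_⟩
  calc x i ≤ ∑ j, x j := Finset.single_le_sum (fun j _ => h0 j) (Finset.mem_univ i)
  _ ≤ 1 := h1

lemma isCompact_corner (d : ℕ) : IsCompact (corner d) :=
  (isCompact_Icc).of_isClosed_subset (isClosed_corner d) (corner_subset_Icc d)

lemma measurableSet_corner (d : ℕ) : MeasurableSet (corner d) :=
  (isClosed_corner d).measurableSet

lemma integrableOn_corner {E : Type*} [NormedAddCommGroup E] {d : ℕ}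
    {f : (Fin d → ℝ) → E} (hf : Continuous f) : IntegrableOn f (corner d) :=
  hf.continuousOn.integrableOn_compact (isCompact_corner d)

lemma integral_one_sub_pow (n : ℕ) : ∫ s in (0:ℝ)..1, (1 - s)^n = 1/(n+1) := by
  rw [intervalIntegral.integral_comp_sub_left (fun x : ℝ => x ^ n) 1]
  simp [integral_pow]

lemma integral_id_mul_one_sub_sq : ∫ s in (0:ℝ)..1, s * (1-s)^2 = 1/12 := by
  have : ∀ s : ℝ, s * (1-s)^2 = s^1 - 2*s^2 + s^3 := by intro s; ring
  simp_rw [this]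
  have i1 : IntervalIntegrable (fun s : ℝ => s ^ 1) volume 0 1 := by
    apply Continuous.intervalIntegrable; fun_prop
  have i2 : IntervalIntegrable (fun s : ℝ => 2 * s ^ 2) volume 0 1 := by
    apply Continuous.intervalIntegrable; fun_prop
  have i3 : IntervalIntegrable (fun s : ℝ => s ^ 3) volume 0 1 := by
    apply Continuous.intervalIntegrable; fun_prop
  rw [intervalIntegral.integral_add (i1.sub i2) i3, intervalIntegral.integral_sub i1 i2,
    intervalIntegral.integral_const_mul]
  simp [integral_pow]
  norm_num

lemma peel (d m k : ℕ) (hd : 1 ≤ d) (p : Fin (d+1)) (G : (Fin d → ℝ) → ℝ)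
    (hG : Continuous G) (hk : ∀ c : ℝ, 0 ≤ c → ∀ x, G (c • x) = c ^ k * G x) :
    ∫ x in corner (d+1), (x p) ^ m * G (x ∘ p.succAbove) =
      (∫ s in (0:ℝ)..1, s ^ m * (1 - s) ^ (d + k)) * ∫ x in corner d, G x := by
  set J := ∫ x in corner d, G x with hJ
  set e := MeasurableEquiv.piFinSuccAbove (fun _ : Fin (d+1) => ℝ) p with he
  have hmp : MeasurePreserving e volume volume :=
    volume_preserving_piFinSuccAbove (fun _ : Fin (d+1) => ℝ) p
  set S : Set (ℝ × (Fin d → ℝ)) :=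
    {q | (0 ≤ q.1 ∧ ∀ i, 0 ≤ q.2 i) ∧ q.1 + ∑ i, q.2 i ≤ 1} with hS
  set Φ : ℝ × (Fin d → ℝ) → ℝ := fun q => q.1 ^ m * G q.2 with hΦ
  have himg : e '' corner (d+1) = S := by
    rw [MeasurableEquiv.image_eq_preimage_symm]
    ext q
    have hsymm : e.symm q = p.insertNth q.1 q.2 := by
      simp [he, MeasurableEquiv.piFinSuccAbove_symm_apply, Fin.insertNthEquiv]
    simp only [Set.mem_preimage, hsymm, corner, Set.mem_setOf_eq, hS]
    rw [Fin.forall_iff_succAbove p, Fin.sum_univ_succAbove _ p]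
    simp [Fin.insertNth_apply_same, Fin.insertNth_apply_succAbove]
  have hSsub : S ⊆ Set.Icc (0,0) (1,1) := by
    rintro ⟨s, u⟩ ⟨⟨hs, hu⟩, hsum⟩
    have husum : 0 ≤ ∑ i, u i := Finset.sum_nonneg fun i _ => hu i
    constructor
    · exact ⟨hs, fun i => hu i⟩
    · constructor
      · simpa using by linarith
      · intro i
        calc u i ≤ ∑ j, u j := Finset.single_le_sum (fun j _ => hu j) (Finset.mem_univ i)
        _ ≤ 1 := by linarith
  have hSclosed : IsClosed S := by
    have h1 : IsClosed {q : ℝ × (Fin d → ℝ) | 0 ≤ q.1} :=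
      isClosed_le continuous_const continuous_fst
    have h2 : IsClosed {q : ℝ × (Fin d → ℝ) | ∀ i, 0 ≤ q.2 i} := by
      have : {q : ℝ × (Fin d → ℝ) | ∀ i, 0 ≤ q.2 i} = ⋂ i, {q | 0 ≤ q.2 i} := by ext q; simp
      rw [this]
      exact isClosed_iInter fun i =>
        isClosed_le continuous_const ((continuous_apply i).comp continuous_snd)
    have h3 : IsClosed {q : ℝ × (Fin d → ℝ) | q.1 + ∑ i, q.2 i ≤ 1} :=
      isClosed_le (by fun_prop) continuous_const
    exact (h1.inter h2).inter h3
  have hScompact : IsCompact S :=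
    isCompact_Icc.of_isClosed_subset hSclosed hSsub
  have hSmeas : MeasurableSet S := hSclosed.measurableSet
  have hΦcont : Continuous Φ := by fun_prop
  have hint : Integrable (S.indicator Φ) :=
    (hΦcont.continuousOn.integrableOn_compact hScompact).integrable_indicator hSmeas
  have step1 : ∫ x in corner (d+1), (x p) ^ m * G (x ∘ p.succAbove) =
      ∫ q in S, Φ q := by
    rw [← himg, hmp.setIntegral_image_emb e.measurableEmbedding]
    rfl
  rw [step1, ← integral_indicator hSmeas]
  rw [Measure.volume_eq_prod] at hint ⊢
  rw [MeasureTheory.integral_prod _ hint]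
  have inner_eq : (fun s : ℝ => ∫ u, S.indicator Φ (s, u)) =
      fun s => Set.indicator (Set.Icc (0:ℝ) 1) (fun s => s ^ m * ((1-s)^(d+k) * J)) s := by
    funext s
    by_cases hs : s ∈ Set.Icc (0:ℝ) 1
    · obtain ⟨hs0, hs1⟩ := hs
      rw [Set.indicator_of_mem (by exact ⟨hs0, hs1⟩)]
      set slice : Set (Fin d → ℝ) := {u | (∀ i, 0 ≤ u i) ∧ ∑ i, u i ≤ 1 - s} with hslice
      have hfun : (fun u => S.indicator Φ (s, u)) = fun u => s ^ m * slice.indicator G u := by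
        funext u
        by_cases hu : u ∈ slice
        · rw [Set.indicator_of_mem hu, Set.indicator_of_mem]
          exact ⟨⟨hs0, hu.1⟩, by have := hu.2; dsimp only; linarith⟩
        · rw [Set.indicator_of_notMem hu, Set.indicator_of_notMem, mul_zero]
          intro hmem
          exact hu ⟨hmem.1.2, by have := hmem.2; dsimp only at this ⊢; linarith⟩
      rw [hfun, MeasureTheory.integral_const_mul]
      congr 1
      -- ∫ u, slice.indicator G u = (1-s)^(d+k) * J
      rcases eq_or_lt_of_le hs1 with h1 | h1
      · -- s = 1
        subst h1
        have hmeaslice : MeasurableSet slice := by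
          have h1 : MeasurableSet {u : Fin d → ℝ | ∀ i, 0 ≤ u i} := by
            rw [show {u : Fin d → ℝ | ∀ i, 0 ≤ u i} = ⋂ i, {u | 0 ≤ u i} by ext u; simp]
            exact MeasurableSet.iInter fun i =>
              measurableSet_le measurable_const (measurable_pi_apply i)
          have h2 : MeasurableSet {u : Fin d → ℝ | ∑ i, u i ≤ 1 - 1} :=
            measurableSet_le (by fun_prop) measurable_const
          exact h1.inter h2
        have hnull : volume slice = 0 := by
          have hsub : slice ⊆ {0} := by
            intro u hu
            simp only [Set.mem_singleton_iff]
            funext i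
            have h1 : u i ≤ ∑ j, u j :=
              Finset.single_le_sum (fun j _ => hu.1 j) (Finset.mem_univ i)
            have h2 : ∑ j, u j ≤ 1 - 1 := hu.2
            have h3 := hu.1 i
            have : u i = 0 := le_antisymm (by linarith) h3
            simpa using this
          haveI : Nonempty (Fin d) := ⟨⟨0, hd⟩⟩
          exact measure_mono_null hsub (measure_singleton 0)
        rw [integral_indicator hmeaslice, Measure.restrict_eq_zero.mpr hnull,
          integral_zero_measure]
        rw [show (1:ℝ) - 1 = 0 by ring, zero_pow (by omega : d + k ≠ 0), zero_mul]
      · have hc : (0:ℝ) < 1 - s := by linarith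
        have key : ∫ u, slice.indicator G u = ((1-s) ^ d) * ((1-s)^k * J) := by
          have hcs := MeasureTheory.Measure.integral_comp_smul_of_nonneg
            (volume : Measure (Fin d → ℝ)) (slice.indicator G) (1-s) (hR := hc.le)
          have heq : (fun u => slice.indicator G ((1-s) • u)) =
              fun u => (corner d).indicator (fun w => (1-s)^k * G w) u := by
            funext u
            by_cases hu : u ∈ corner d
            · rw [Set.indicator_of_mem hu, Set.indicator_of_mem]
              · exact hk (1-s) hc.le u
              · refine ⟨fun i => by simpa using mul_nonneg hc.le (hu.1 i), ?_⟩
                simp only [Pi.smul_apply, smul_eq_mul, ← Finset.mul_sum]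
                calc (1-s) * ∑ i, u i ≤ (1-s) * 1 :=
                  mul_le_mul_of_nonneg_left hu.2 hc.le
                _ = 1 - s := mul_one _
            · rw [Set.indicator_of_notMem hu, Set.indicator_of_notMem]
              intro hmem
              refine hu ⟨fun i => ?_, ?_⟩
              · have := hmem.1 i
                simp only [Pi.smul_apply, smul_eq_mul] at this
                exact nonneg_of_mul_nonneg_right this hc
              · have := hmem.2
                simp only [Pi.smul_apply, smul_eq_mul, ← Finset.mul_sum] at this
                exact le_of_mul_le_mul_left (by linarith) hc
          rw [heq] at hcs
          have hrank : Module.finrank ℝ (Fin d → ℝ) = d := by simp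
          rw [hrank] at hcs
          rw [integral_indicator (measurableSet_corner d), integral_const_mul] at hcs
          have hpow : ((1:ℝ)-s)^d ≠ 0 := pow_ne_zero _ (by linarith)
          rw [← hJ] at hcs
          rw [smul_eq_mul] at hcs
          rw [hcs, ← mul_assoc, mul_inv_cancel₀ hpow, one_mul]
        rw [key]; ring
    · rw [Set.indicator_of_notMem hs]
      have : (fun u => S.indicator Φ (s, u)) = fun _ => (0:ℝ) := by
        funext u
        rw [Set.indicator_of_notMem]
        intro hmem
        simp only [Set.mem_Icc, not_and_or, not_le] at hs
        have husum : 0 ≤ ∑ i, u i := Finset.sum_nonneg fun i _ => hmem.1.2 i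
        have h2 := hmem.2
        have h1 := hmem.1.1
        dsimp only at h2
        rcases hs with h | h
        · linarith
        · linarith
      rw [this, integral_zero]
  rw [inner_eq, integral_indicator measurableSet_Icc,
    integral_Icc_eq_integral_Ioc, ← intervalIntegral.integral_of_le (by norm_num : (0:ℝ) ≤ 1)]
  rw [← intervalIntegral.integral_mul_const]
  congr 1
  funext s
  ring

lemma integral_corner_one (g : ℝ → ℝ) :
    ∫ x in corner 1, g (x 0) = ∫ t in (0:ℝ)..1, g t := by
  have hmp : MeasurePreserving (MeasurableEquiv.funUnique (Fin 1) ℝ) volume volume :=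
    volume_preserving_funUnique (Fin 1) ℝ
  have himg : (MeasurableEquiv.funUnique (Fin 1) ℝ) '' corner 1 = Set.Icc 0 1 := by
    rw [MeasurableEquiv.image_eq_preimage_symm]
    ext y
    simp only [Set.mem_preimage, Set.mem_Icc, corner, Set.mem_setOf_eq]
    constructor
    · rintro ⟨h0, h1⟩
      exact ⟨by simpa using h0 0, by simpa using h1⟩
    · rintro ⟨h0, h1⟩
      exact ⟨fun i => by simpa using h0, by simpa using h1⟩
  have := hmp.setIntegral_image_emb (MeasurableEquiv.measurableEmbedding _) g (corner 1)
  rw [himg] at this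
  rw [show (∫ x in corner 1, g (x 0)) =
    ∫ x in corner 1, g ((MeasurableEquiv.funUnique (Fin 1) ℝ) x) from rfl, ← this,
    integral_Icc_eq_integral_Ioc, ← intervalIntegral.integral_of_le (by norm_num : (0:ℝ) ≤ 1)]

lemma mom0 : ∀ d : ℕ, 1 ≤ d → ∫ _x in corner d, (1:ℝ) = ((d.factorial : ℝ))⁻¹ := by
  refine Nat.le_induction ?_ ?_
  · have h := integral_corner_one (fun _ => (1:ℝ))
    simp only [intervalIntegral.integral_const, smul_eq_mul, mul_one, sub_zero, one_smul] at h
    simpa [Nat.factorial] using h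
  · intro d hd ih
    have h := peel d 0 0 hd 0 (fun _ => (1:ℝ)) continuous_const (by intro c hc x; simp)
    simp only [pow_zero, one_mul, mul_one, add_zero] at h
    rw [show (fun _x : Fin (d+1) → ℝ => (1:ℝ)) = fun x : Fin (d+1) → ℝ => (1:ℝ) from rfl]
    rw [h, ih, integral_one_sub_pow, Nat.factorial_succ]
    push_cast
    rw [mul_comm]
    field_simp

lemma mom1 : ∀ d : ℕ, 1 ≤ d → ∀ i : Fin d,
    ∫ x in corner d, x i = (((d+1).factorial : ℝ))⁻¹ := by
  refine Nat.le_induction ?_ ?_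
  · intro i
    have hi : i = 0 := Subsingleton.elim i 0
    subst hi
    have h := integral_corner_one (fun t => t)
    norm_num [integral_id] at h
    rw [h]
    norm_num [Nat.factorial]
  · intro d hd ih i
    obtain ⟨p, hp⟩ := Fintype.exists_ne_of_one_lt_card (by simp; omega) i
    obtain ⟨i', hi'⟩ := Fin.exists_succAbove_eq (show i ≠ p from fun h => hp h.symm)
    have h := peel d 0 1 hd p (fun w => w i') (continuous_apply i')
      (by intro c hc x; simp [mul_comm])
    simp only [pow_zero, one_mul] at h
    have hgoal : (fun x : Fin (d+1) → ℝ => x i) =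
        fun x : Fin (d+1) → ℝ => (x ∘ p.succAbove) i' := by
      funext x; rw [Function.comp_apply, hi']
    rw [hgoal, h, ih, integral_one_sub_pow]
    rw [show d + 1 + 1 = d + 2 from rfl, Nat.factorial_succ (d+1)]
    push_cast
    rw [mul_comm]
    field_simp

lemma mom2 : ∀ d : ℕ, 1 ≤ d → ∀ i j : Fin d,
    ∫ x in corner d, x i * x j =
      (if i = j then 2 else 1) / (((d+2).factorial : ℝ)) := by
  refine Nat.le_induction ?_ ?_
  · intro i j
    have hi : i = 0 := Subsingleton.elim i 0
    have hj : j = 0 := Subsingleton.elim j 0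
    subst hi; subst hj
    have h := integral_corner_one (fun t => t * t)
    have h2 : (∫ t in (0:ℝ)..1, t * t) = 1/3 := by
      have : ∀ t : ℝ, t * t = t ^ 2 := fun t => (sq t).symm
      simp_rw [this]
      rw [integral_pow]
      norm_num
    rw [h2] at h
    rw [h]
    norm_num [Nat.factorial]
  · intro d hd ih i j
    by_cases hij : i = j
    · subst hij
      obtain ⟨p, hp⟩ := Fintype.exists_ne_of_one_lt_card (by simp; omega) i
      obtain ⟨i', hi'⟩ := Fin.exists_succAbove_eq (show i ≠ p from fun h => hp h.symm)
      have h := peel d 0 2 hd p (fun w => w i' * w i')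
        (by fun_prop) (by intro c hc x; simp; ring)
      simp only [pow_zero, one_mul] at h
      have hgoal : (fun x : Fin (d+1) → ℝ => x i * x i) =
          fun x : Fin (d+1) → ℝ => (x ∘ p.succAbove) i' * (x ∘ p.succAbove) i' := by
        funext x; rw [Function.comp_apply, hi']
      rw [hgoal, h, ih i' i', integral_one_sub_pow]
      simp only [if_pos rfl]
      rw [show d + 1 + 2 = (d + 2) + 1 from rfl, Nat.factorial_succ (d+2)]
      push_cast
      field_simp
    · rcases eq_or_lt_of_le hd with hd1 | hd2
      · -- d = 1, so Fin 2, i ≠ j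
        subst hd1
        have hx : ∀ x : Fin 2 → ℝ, x i * x j = x 1 * ((x ∘ (1 : Fin 2).succAbove) 0) := by
          intro x
          have h01 : ((1 : Fin 2).succAbove 0) = 0 := rfl
          rw [Function.comp_apply, h01]
          fin_cases i <;> fin_cases j <;> simp_all <;> ring
        have h := peel 1 1 1 le_rfl 1 (fun w => w 0) (continuous_apply 0)
          (by intro c hc x; simp [mul_comm])
        simp_rw [show ∀ x : Fin 2 → ℝ, x i * x j = (x 1)^1 * ((x ∘ (1 : Fin 2).succAbove) 0) from
          fun x => by rw [pow_one]; exact hx x]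
        rw [h]
        have h3 : (∫ s in (0:ℝ)..1, s ^ 1 * (1 - s) ^ (1+1)) = 1/12 := by
          simp only [pow_one, show (1:ℕ)+1 = 2 from rfl]
          exact integral_id_mul_one_sub_sq
        have h4 := integral_corner_one (fun t => t)
        norm_num [integral_id] at h4
        rw [h3, h4, if_neg hij]
        norm_num [Nat.factorial]
      · -- d ≥ 2, so Fin (d+1) has ≥ 3 elements
        have hcard : ({i, j} : Finset (Fin (d+1))).card < (Finset.univ : Finset (Fin (d+1))).card := by
          have h2 : ({i, j} : Finset (Fin (d+1))).card ≤ 2 :=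
            Finset.card_insert_le i {j} |>.trans (by simp)
          simp only [Finset.card_univ, Fintype.card_fin]
          omega
        have hssub : ({i, j} : Finset (Fin (d+1))) ⊂ Finset.univ :=
          Finset.ssubset_univ_iff.mpr (fun h => by rw [h] at hcard; exact lt_irrefl _ hcard)
        obtain ⟨p, _, hp⟩ := Finset.exists_of_ssubset hssub
        simp only [Finset.mem_insert, Finset.mem_singleton, not_or] at hp
        obtain ⟨hpi, hpj⟩ := hp
        obtain ⟨i', hi'⟩ := Fin.exists_succAbove_eq (show i ≠ p from fun h => hpi h.symm)
        obtain ⟨j', hj'⟩ := Fin.exists_succAbove_eq (show j ≠ p from fun h => hpj h.symm)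
        have hij' : i' ≠ j' := by
          intro h; apply hij; rw [← hi', ← hj', h]
        have h := peel d 0 2 hd p (fun w => w i' * w j')
          (by fun_prop) (by intro c hc x; simp; ring)
        simp only [pow_zero, one_mul] at h
        have hgoal : (fun x : Fin (d+1) → ℝ => x i * x j) =
            fun x : Fin (d+1) → ℝ => (x ∘ p.succAbove) i' * (x ∘ p.succAbove) j' := by
          funext x; simp only [Function.comp_apply, hi', hj']
        rw [hgoal, h, ih i' j', integral_one_sub_pow, if_neg hij', if_neg hij]
        rw [show d + 1 + 2 = (d + 2) + 1 from rfl, Nat.factorial_succ (d+2)]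
        push_cast
        field_simp

lemma sum_ite_eq_card (d : ℕ) (k : Fin d) :
    ∑ l : Fin d, (if k = l then (2:ℝ) else 1) = d + 1 := by
  have : ∀ l : Fin d, (if k = l then (2:ℝ) else 1) = 1 + (if k = l then 1 else 0) := by
    intro l; split <;> norm_num
  simp_rw [this]
  rw [Finset.sum_add_distrib, Finset.sum_ite_eq]
  simp [add_comm]

lemma momW (d : ℕ) (hd : 1 ≤ d) (i j : Fin (d+1)) :
    ∫ t in corner d, (Fin.snoc t (1 - ∑ k, t k) : Fin (d+1) → ℝ) i *
      (Fin.snoc t (1 - ∑ k, t k) : Fin (d+1) → ℝ) j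
      = (if i = j then 2 else 1) / (((d+2).factorial : ℝ)) := by
  have hfac : ((d+2).factorial : ℝ) = (d+2) * (d+1) * (d.factorial : ℝ) := by
    rw [show d + 2 = (d+1) + 1 from rfl, Nat.factorial_succ, Nat.factorial_succ]
    push_cast; ring
  have hfac0 : (d.factorial : ℝ) ≠ 0 := by positivity
  have hfac1 : (((d+1).factorial : ℝ)) = (d+1) * d.factorial := by
    rw [Nat.factorial_succ]; push_cast; ring
  have hcs : ∀ (k : Fin d), ∫ t in corner d, t k * (1 - ∑ l, t l)
      = 1 / (((d+2).factorial : ℝ)) := by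
    intro k
    have expand : (fun t : Fin d → ℝ => t k * (1 - ∑ l, t l)) =
        fun t => t k - ∑ l, t k * t l := by
      funext t; rw [mul_one_sub, Finset.mul_sum]
    rw [expand]
    rw [MeasureTheory.integral_sub (integrableOn_corner (continuous_apply k))
      (MeasureTheory.integrable_finset_sum _ (fun l _ =>
        integrableOn_corner (by fun_prop)))]
    rw [MeasureTheory.integral_finset_sum _ (fun l _ =>
        integrableOn_corner (by fun_prop))]
    rw [mom1 d hd k]
    have : ∀ l ∈ Finset.univ, (∫ t in corner d, t k * t l) =
        (if k = l then (2:ℝ) else 1) / ((d+2).factorial : ℝ) :=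
      fun l _ => mom2 d hd k l
    rw [Finset.sum_congr rfl this, ← Finset.sum_div, sum_ite_eq_card]
    rw [hfac, hfac1]
    field_simp
    ring
  refine Fin.lastCases ?_ ?_ i
  · refine Fin.lastCases ?_ ?_ j
    · -- both last
      simp only [Fin.snoc_last, eq_self_iff_true, if_true]
      have expand : (fun t : Fin d → ℝ => (1 - ∑ k, t k) * (1 - ∑ k, t k)) =
          fun t => 1 - 2 * (∑ k, t k) + ∑ k, ∑ l, t k * t l := by
        funext t
        rw [← Finset.sum_mul_sum]
        ring
      rw [expand]
      have hQint : ∀ k : Fin d, IntegrableOn (fun t : Fin d → ℝ => ∑ l, t k * t l)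
          (corner d) := fun k => integrableOn_corner (by fun_prop)
      have hint1 : IntegrableOn (fun t : Fin d → ℝ => 1 - 2 * ∑ k, t k) (corner d) :=
        integrableOn_corner (by fun_prop)
      have hint2 : IntegrableOn (fun t : Fin d → ℝ => 2 * ∑ k, t k) (corner d) :=
        integrableOn_corner (by fun_prop)
      rw [MeasureTheory.integral_add hint1
        (MeasureTheory.integrable_finset_sum _ (fun k _ => hQint k))]
      rw [MeasureTheory.integral_sub (integrableOn_corner continuous_const) hint2]
      rw [MeasureTheory.integral_finset_sum _ (fun k _ => hQint k)]
      have hQ : ∀ k ∈ Finset.univ, (∫ t in corner d, ∑ l, t k * t l) =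
          (d + 1) / ((d+2).factorial : ℝ) := by
        intro k _
        rw [MeasureTheory.integral_finset_sum _ (fun l _ =>
          integrableOn_corner (by fun_prop))]
        have : ∀ l ∈ Finset.univ, (∫ t in corner d, t k * t l) =
            (if k = l then (2:ℝ) else 1) / ((d+2).factorial : ℝ) :=
          fun l _ => mom2 d hd k l
        rw [Finset.sum_congr rfl this, ← Finset.sum_div, sum_ite_eq_card]
      rw [Finset.sum_congr rfl hQ]
      have hS : (∫ t in corner d, 2 * ∑ k, t k) = 2 * (d / ((d+1).factorial : ℝ)) := by
        rw [MeasureTheory.integral_const_mul,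
          MeasureTheory.integral_finset_sum _ (fun k _ =>
            integrableOn_corner (continuous_apply k))]
        have : ∀ k ∈ Finset.univ, (∫ t in corner d, t k) = (((d+1).factorial : ℝ))⁻¹ :=
          fun k _ => mom1 d hd k
        rw [Finset.sum_congr rfl this, Finset.sum_const]
        simp [div_eq_mul_inv]
      rw [hS, mom0 d hd, Finset.sum_const]
      simp only [Finset.card_univ, Fintype.card_fin, nsmul_eq_mul]
      rw [hfac, hfac1]
      field_simp
      ring
    · -- i = last, j = castSucc k
      intro k
      simp only [Fin.snoc_last, Fin.snoc_castSucc]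
      have hne : Fin.last d ≠ Fin.castSucc k := (Fin.castSucc_lt_last k).ne'
      rw [if_neg hne]
      have : (fun t : Fin d → ℝ => (1 - ∑ l, t l) * t k) =
          fun t : Fin d → ℝ => t k * (1 - ∑ l, t l) := by
        funext t; ring
      rw [this, hcs k]
  · intro k
    refine Fin.lastCases ?_ ?_ j
    · simp only [Fin.snoc_last, Fin.snoc_castSucc]
      have hne : Fin.castSucc k ≠ Fin.last d := (Fin.castSucc_lt_last k).ne
      rw [if_neg hne]
      exact hcs k
    · intro l
      simp only [Fin.snoc_castSucc]
      rw [mom2 d hd k l]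
      congr 1
      simp [Fin.castSucc_inj]

/-- the `L₂` inner product of two complex affine functions over a `d`-simplex is a
Hermitian form in the vertex values with matrix `P = 1 + I`. -/
theorem integral_conj_mul_affine_simplex (d : ℕ) (hd : 1 ≤ d)
    (a b : Fin d → ℂ) (a0 b0 : ℂ) (f g : (Fin d → ℝ) → ℂ)
    (hf : ∀ x, f x = (∑ i, a i * (x i : ℂ)) + a0)
    (hg : ∀ x, g x = (∑ i, b i * (x i : ℂ)) + b0)
    (v : Fin (d + 1) → (Fin d → ℝ)) (hv : AffineIndependent ℝ v) :
    ∫ x in convexHull ℝ (Set.range v), (starRingEnd ℂ) (f x) * g x =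
      (((volume (convexHull ℝ (Set.range v))).toReal / ((d + 1) * (d + 2)) : ℝ) : ℂ) *
        ∑ i, ∑ j, (starRingEnd ℂ) (f (v i)) * (if i = j then 2 else 1) * g (v j) := by
  classical
  set A : Fin d → (Fin d → ℝ) := fun k => v k.castSucc - v (Fin.last d) with hA
  set L : (Fin d → ℝ) →L[ℝ] (Fin d → ℝ) :=
    ∑ k, (ContinuousLinearMap.proj k).smulRight (A k) with hL
  have hLapply : ∀ t, L t = ∑ k, t k • A k := by
    intro t
    simp [hL, ContinuousLinearMap.sum_apply, ContinuousLinearMap.smulRight_apply,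
      ContinuousLinearMap.proj_apply]
  set T : (Fin d → ℝ) → (Fin d → ℝ) := fun t => L t + v (Fin.last d) with hT
  set W : (Fin d → ℝ) → (Fin (d+1) → ℝ) := fun t => Fin.snoc t (1 - ∑ k, t k) with hW
  have hWcs : ∀ t (k : Fin d), W t k.castSucc = t k := fun t k => Fin.snoc_castSucc _ _ _
  have hWlast : ∀ t, W t (Fin.last d) = 1 - ∑ k, t k := fun t => Fin.snoc_last _ _
  have hWsum : ∀ t, ∑ i, W t i = 1 := by
    intro t
    rw [Fin.sum_univ_castSucc]
    simp only [hWcs, hWlast]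
    ring
  have hTW : ∀ t, T t = ∑ i, W t i • v i := by
    intro t
    rw [Fin.sum_univ_castSucc]
    simp only [hWcs, hWlast]
    show L t + v (Fin.last d) = _
    rw [hLapply]
    simp only [hA, smul_sub, sub_smul, one_smul]
    rw [Finset.sum_sub_distrib, ← Finset.sum_smul]
    abel
  have hLinj : Function.Injective L := by
    have hli : LinearIndependent ℝ A := by
      have h1 := (affineIndependent_iff_linearIndependent_vsub ℝ v (Fin.last d)).mp hv
      have h2 := h1.comp
        (fun k : Fin d => (⟨k.castSucc, (Fin.castSucc_lt_last k).ne⟩ :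
          {x : Fin (d+1) // x ≠ Fin.last d}))
        (fun k l hkl => by
          have := congrArg (fun x => x.1) hkl
          simpa [Fin.castSucc_inj] using this)
      simpa [hA, Function.comp_def] using h2
    intro x y hxy
    have h0 : L (x - y) = 0 := by rw [map_sub, hxy, sub_self]
    rw [hLapply] at h0
    have hz := Fintype.linearIndependent_iff.mp hli (x - y) (by simpa using h0)
    have hxy0 : x - y = 0 := funext fun i => hz i
    exact sub_eq_zero.mp hxy0
  have hTinj : Function.Injective T := by
    intro x y hxy
    apply hLinj
    have : L x + v (Fin.last d) = L y + v (Fin.last d) := hxy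
    exact add_right_cancel this
  have hder : ∀ t, HasFDerivAt T L t := fun t => L.hasFDerivAt.add_const (v (Fin.last d))
  have hhull : convexHull ℝ (Set.range v) = T '' corner d := by
    apply Set.Subset.antisymm
    · intro x hx
      rw [convexHull_range_eq_exists_affineCombination] at hx
      obtain ⟨s, wt, h0, h1, hx⟩ := hx
      set w' : Fin (d+1) → ℝ := Set.indicator ↑s wt with hw'
      have hsum : ∑ i, w' i = 1 := by
        rw [hw']
        have hind : ∀ i, (↑s : Set (Fin (d+1))).indicator wt i =
            if i ∈ s then wt i else 0 := fun i => by simp [Set.indicator_apply]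
        simp_rw [hind]
        rw [Finset.sum_ite_mem, Finset.univ_inter]
        exact h1
      have hx2 : x = ∑ i, w' i • v i := by
        rw [← hx, Finset.affineCombination_indicator_subset wt v (Finset.subset_univ s)]
        exact Finset.affineCombination_eq_linear_combination _ _ _ hsum
      have hw0 : ∀ i, 0 ≤ w' i := by
        intro i
        rw [hw']
        by_cases hi : i ∈ (↑s : Set (Fin (d+1)))
        · rw [Set.indicator_of_mem hi]; exact h0 i hi
        · rw [Set.indicator_of_notMem hi]
      set t : Fin d → ℝ := fun k => w' k.castSucc with ht'
      have hWt : ∀ i, W t i = w' i := by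
        refine Fin.lastCases ?_ ?_
        · rw [hWlast]
          have : ∑ k, t k = 1 - w' (Fin.last d) := by
            rw [← hsum, Fin.sum_univ_castSucc]; ring
          rw [this]; ring
        · intro k; rw [hWcs]
      refine ⟨t, ⟨fun k => hw0 _, ?_⟩, ?_⟩
      · have : ∑ k, t k = 1 - w' (Fin.last d) := by
          rw [← hsum, Fin.sum_univ_castSucc]; ring
        rw [this]
        linarith [hw0 (Fin.last d)]
      · rw [hTW, hx2]
        exact Finset.sum_congr rfl fun i _ => by rw [hWt i]
    · rintro x ⟨t, ht, rfl⟩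
      rw [hTW]
      have hW0 : ∀ i, 0 ≤ W t i := by
        refine Fin.lastCases ?_ ?_
        · rw [hWlast]; linarith [ht.2]
        · intro k; rw [hWcs]; exact ht.1 k
      exact mem_convexHull_of_exists_fintype (W t) v hW0 (hWsum t)
        (fun i => Set.mem_range_self i) rfl
  set φ : Fin (d+1) → ℂ := fun i => (starRingEnd ℂ) (f (v i)) with hφ
  set γ : Fin (d+1) → ℂ := fun j => g (v j) with hγ
  have hvolcorner : (volume (corner d)).toReal = ((d.factorial : ℝ))⁻¹ := by
    have h2 := mom0 d hd
    rwa [setIntegral_const, smul_eq_mul, mul_one] at h2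
  have hvol : (volume (convexHull ℝ (Set.range v))).toReal
      = |L.det| * ((d.factorial : ℝ))⁻¹ := by
    have h1 := integral_image_eq_integral_abs_det_fderiv_smul volume (measurableSet_corner d)
      (fun t _ => (hder t).hasFDerivWithinAt) (Function.Injective.injOn hTinj)
      (fun _ : Fin d → ℝ => (1:ℝ))
    rw [setIntegral_const, ← hhull] at h1
    simp only [smul_eq_mul, mul_one] at h1
    rw [← measureReal_def, h1, setIntegral_const, smul_eq_mul, measureReal_def, hvolcorner, mul_comm]
  have hfgT : ∀ (c : Fin d → ℂ) (c0 : ℂ) (F : (Fin d → ℝ) → ℂ)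
      (hF : ∀ x, F x = (∑ i, c i * (x i : ℂ)) + c0) (t : Fin d → ℝ),
      F (T t) = ∑ i, ((W t i : ℝ) : ℂ) * F (v i) := by
    intro c c0 F hF t
    have hT2 : ∀ j, T t j = ∑ i, W t i * v i j := by
      intro j
      rw [hTW]
      simp [Finset.sum_apply]
    have h1 : ∑ i, ((W t i : ℝ):ℂ) = 1 := by
      rw [← Complex.ofReal_sum]
      rw [hWsum t]
      norm_num
    calc F (T t) = (∑ j, c j * ((T t j : ℝ):ℂ)) + c0 := hF _
      _ = (∑ j, ∑ i, ((W t i : ℝ):ℂ) * (c j * ((v i j : ℝ):ℂ))) + c0 := by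
          congr 1
          refine Finset.sum_congr rfl fun j _ => ?_
          rw [hT2 j]
          push_cast
          rw [Finset.mul_sum]
          refine Finset.sum_congr rfl fun i _ => by ring
      _ = (∑ i, ∑ j, ((W t i : ℝ):ℂ) * (c j * ((v i j : ℝ):ℂ))) + c0 := by
          rw [Finset.sum_comm]
      _ = (∑ i, ((W t i : ℝ):ℂ) * (∑ j, c j * ((v i j : ℝ):ℂ)))
            + (∑ i, ((W t i : ℝ):ℂ)) * c0 := by
          rw [h1, one_mul]
          congr 1
          exact Finset.sum_congr rfl fun i _ => (Finset.mul_sum _ _ _).symm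
      _ = ∑ i, ((W t i : ℝ):ℂ) * ((∑ j, c j * ((v i j : ℝ):ℂ)) + c0) := by
          rw [Finset.sum_mul, ← Finset.sum_add_distrib]
          exact Finset.sum_congr rfl fun i _ => by ring
      _ = ∑ i, ((W t i : ℝ):ℂ) * F (v i) := by
          exact Finset.sum_congr rfl fun i _ => by rw [hF (v i)]
  have hWcont : ∀ i : Fin (d+1), Continuous fun t : Fin d → ℝ => W t i := by
    intro i
    refine Fin.lastCases ?_ ?_ i
    · simp only [hWlast]
      fun_prop
    · intro k
      simp only [hWcs]
      exact continuous_apply k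
  have hterm : ∀ (i j : Fin (d+1)), Continuous fun t : Fin d → ℝ =>
      ((W t i * W t j : ℝ) : ℂ) * (φ i * γ j) := fun i j =>
    (Complex.continuous_ofReal.comp ((hWcont i).mul (hWcont j))).mul continuous_const
  have key := integral_image_eq_integral_abs_det_fderiv_smul volume (measurableSet_corner d)
    (fun t _ => (hder t).hasFDerivWithinAt) (Function.Injective.injOn hTinj)
    (fun x => (starRingEnd ℂ) (f x) * g x)
  rw [hhull, key]
  have hexp : ∀ t, (starRingEnd ℂ) (f (T t)) * g (T t) =
      ∑ i, ∑ j, ((W t i * W t j : ℝ) : ℂ) * (φ i * γ j) := by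
    intro t
    rw [hfgT a a0 f hf t, hfgT b b0 g hg t, map_sum, Finset.sum_mul_sum]
    refine Finset.sum_congr rfl fun i _ => Finset.sum_congr rfl fun j _ => ?_
    rw [map_mul, Complex.conj_ofReal]
    rw [hφ, hγ]
    push_cast
    ring
  simp_rw [hexp]
  rw [integral_smul]
  rw [MeasureTheory.integral_finset_sum _ (fun i _ => MeasureTheory.integrable_finset_sum _
      (fun j _ => integrableOn_corner (hterm i j)))]
  have hin : ∀ i, (∫ t in corner d, ∑ j, ((W t i * W t j : ℝ):ℂ) * (φ i * γ j))
      = ∑ j, (((if i = j then (2:ℝ) else 1) / ((d+2).factorial : ℝ) : ℝ) : ℂ)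
          * (φ i * γ j) := by
    intro i
    rw [MeasureTheory.integral_finset_sum _ (fun j _ => integrableOn_corner (hterm i j))]
    refine Finset.sum_congr rfl fun j _ => ?_
    rw [MeasureTheory.integral_mul_const]
    congr 1
    have hm : (∫ t in corner d, W t i * W t j)
        = (if i = j then (2:ℝ) else 1) / ((d+2).factorial : ℝ) := by
      simp only [hW]
      exact momW d hd i j
    rw [← hm]
    exact integral_ofReal
  rw [Finset.sum_congr rfl fun i _ => hin i]
  rw [hhull] at hvol
  rw [hvol]
  have hfac : ((d+2).factorial : ℝ) = ((d:ℝ)+2) * ((d:ℝ)+1) * (d.factorial : ℝ) := by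
    rw [show d + 2 = (d+1) + 1 from rfl, Nat.factorial_succ, Nat.factorial_succ]
    push_cast
    ring
  have hfac0 : ((d.factorial : ℝ)) ≠ 0 := by positivity
  have hd1 : ((d:ℝ)+1) ≠ 0 := by positivity
  have hd2 : ((d:ℝ)+2) ≠ 0 := by positivity
  rw [Complex.real_smul, Finset.mul_sum, Finset.mul_sum]
  refine Finset.sum_congr rfl fun i _ => ?_
  rw [Finset.mul_sum, Finset.mul_sum]
  refine Finset.sum_congr rfl fun j _ => ?_
  rw [hfac]
  split_ifs with h
  · push_cast
    field_simp
    ring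
  · push_cast
    field_simp
    ring
end

section
/- Let K ≥ 2 be an integer and h > 0. Let M ∈ ℝ^{K×K} be the matrix with entries M_{p,1} = 1 for all 1 ≤ p ≤ K, and for 2 ≤ q ≤ K, M_{p,q} = h·(p − q + 1) if p ≥ q and M_{p,q} = 0 if p < q. Then M is invertible and its ℓ₂ condition number satisfies ‖M‖₂ · ‖M^{-1}‖₂ ≥ √(K(K−1)(2K−1)/6), where ‖·‖₂ denotes the operator norm induced by the Euclidean norm. -/
open MeasureTheory
open Matrix


lemma sum_range_sq (n : ℕ) :
    ∑ p ∈ Finset.range n, (p : ℝ) ^ 2 = n * (n - 1) * (2 * n - 1) / 6 := by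
  induction n with
  | zero => simp
  | succ n ih =>
    rw [Finset.sum_range_succ, ih]
    push_cast
    ring

lemma eucl_coord_le_norm {n : ℕ} (x : EuclideanSpace ℝ (Fin n)) (i : Fin n) : |x i| ≤ ‖x‖ := by
  rw [EuclideanSpace.norm_eq]
  calc |x i| = Real.sqrt (‖x i‖ ^ 2) := by rw [Real.sqrt_sq_eq_abs]; simp
  _ ≤ _ := by
      apply Real.sqrt_le_sqrt
      exact Finset.single_le_sum (f := fun j => ‖x j‖ ^ 2)
        (fun j _ => by positivity) (Finset.mem_univ i)


/-- the interpolation matrix of the nonlocal (ReLU-based) parametrization of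
one-dimensional CPWL functions on `K` equispaced control points with step `h` is invertible
and its `ℓ₂` (spectral) condition number is at least `√(K(K−1)(2K−1)/6)`. -/
theorem nonlocal_interpolation_condition_number (K : ℕ) (hK : 2 ≤ K) (h : ℝ) (hh : 0 < h)
    (M : Matrix (Fin K) (Fin K) ℝ)
    (hM : ∀ p q : Fin K, M p q =
      if (q : ℕ) = 0 then 1
      else if (q : ℕ) ≤ (p : ℕ) then h * (((p : ℕ) - (q : ℕ) + 1 : ℕ) : ℝ) else 0) :
    IsUnit M.det ∧
    ‖Matrix.toEuclideanCLM (𝕜 := ℝ) M‖ * ‖Matrix.toEuclideanCLM (𝕜 := ℝ) M⁻¹‖ ≥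
      Real.sqrt ((K * (K - 1) * (2 * K - 1) : ℝ) / 6) := by
  set i0 : Fin K := ⟨0, by omega⟩ with hi0
  set i1 : Fin K := ⟨1, by omega⟩ with hi1
  -- determinant is a unit
  have htri : M.BlockTriangular OrderDual.toDual := by
    intro i j hij
    simp only [OrderDual.toDual_lt_toDual, Fin.lt_def] at hij
    rw [hM]
    have h1 : (j : ℕ) ≠ 0 := by omega
    have h2 : ¬ (j : ℕ) ≤ (i : ℕ) := by omega
    simp [h1, h2]
  have hdiag : ∀ i : Fin K, M i i = if (i : ℕ) = 0 then 1 else h := by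
    intro i
    rw [hM]
    by_cases hi : (i : ℕ) = 0 <;> simp [hi]
  have hdet : M.det = ∏ i, M i i := Matrix.det_of_lowerTriangular M htri
  have hdetu : IsUnit M.det := by
    rw [hdet, isUnit_iff_ne_zero]
    apply Finset.prod_ne_zero_iff.2
    intro i _
    rw [hdiag]
    split <;> [norm_num; exact hh.ne']
  refine ⟨hdetu, ?_⟩
  -- the column norm
  set S : ℝ := (K * (K - 1) * (2 * K - 1) : ℝ) / 6 with hS
  have hSsum : ∑ p : Fin K, ((p : ℕ) : ℝ) ^ 2 = S := by
    rw [hS, ← sum_range_sq K]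
    exact Fin.sum_univ_eq_sum_range (fun n => (n : ℝ) ^ 2) K
  have hS0 : 0 ≤ S := by
    rw [← hSsum]; positivity
  -- column of M at i1
  have hcol : ∀ p : Fin K, M p i1 = h * (p : ℕ) := by
    intro p
    rw [hM]
    rcases Nat.eq_zero_or_pos (p : ℕ) with hp | hp
    · simp [hi1, hp]
    · have : (1 : ℕ) ≤ (p : ℕ) := hp
      simp only [hi1]
      norm_num [this]
  set e1 : EuclideanSpace ℝ (Fin K) := EuclideanSpace.single i1 1 with he1
  have he1norm : ‖e1‖ = 1 := by simp [he1]
  have hMe1 : Matrix.toEuclideanCLM (𝕜 := ℝ) M e1 =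
      (WithLp.equiv 2 (Fin K → ℝ)).symm (M *ᵥ Pi.single i1 1) := by
    rw [he1]
    exact Matrix.toEuclideanCLM_toLp M (Pi.single i1 1)
  have hMe1norm : ‖Matrix.toEuclideanCLM (𝕜 := ℝ) M e1‖ = h * Real.sqrt S := by
    rw [hMe1, EuclideanSpace.norm_eq]
    have : ∀ p : Fin K, ‖((WithLp.equiv 2 (Fin K → ℝ)).symm (M *ᵥ Pi.single i1 1)) p‖ ^ 2
        = h ^ 2 * ((p : ℕ) : ℝ) ^ 2 := by
      intro p
      have : (M *ᵥ Pi.single i1 1) p = M p i1 := by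
        simp [Matrix.mulVec_single]
      simp only [WithLp.equiv_symm_apply, WithLp.ofLp_toLp, this, hcol, Real.norm_eq_abs]
      rw [sq_abs]; ring
    rw [Finset.sum_congr rfl (fun p _ => this p), ← Finset.mul_sum, hSsum,
      Real.sqrt_mul (by positivity), Real.sqrt_sq hh.le]
  -- lower bound for ‖M‖
  have hnormM : h * Real.sqrt S ≤ ‖Matrix.toEuclideanCLM (𝕜 := ℝ) M‖ := by
    rw [← hMe1norm]
    calc ‖Matrix.toEuclideanCLM (𝕜 := ℝ) M e1‖
        ≤ ‖Matrix.toEuclideanCLM (𝕜 := ℝ) M‖ * ‖e1‖ :=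
          (Matrix.toEuclideanCLM (𝕜 := ℝ) M).le_opNorm e1
      _ = ‖Matrix.toEuclideanCLM (𝕜 := ℝ) M‖ := by rw [he1norm, mul_one]
  -- lower bound for ‖M⁻¹‖
  set v : Fin K → ℝ := M⁻¹ *ᵥ Pi.single i1 1 with hv
  have hMv : M *ᵥ v = Pi.single i1 1 := by
    rw [hv, Matrix.mulVec_mulVec, Matrix.mul_nonsing_inv M hdetu, Matrix.one_mulVec]
  have hv0 : v i0 = 0 := by
    have := congrFun hMv i0
    rw [Matrix.mulVec, dotProduct] at this
    rw [Finset.sum_eq_single i0 (fun q _ hq => by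
      have hq' : (q : ℕ) ≠ 0 := fun hc => hq (Fin.ext hc)
      have hq2 : ¬ (q : ℕ) ≤ (i0 : ℕ) := by simp [hi0]; omega
      rw [hM]; simp [hq', hq2]) (fun hc => absurd (Finset.mem_univ i0) hc)] at this
    have hM00 : M i0 i0 = 1 := by rw [hM]; simp [hi0]
    rw [hM00, one_mul] at this
    rw [this]
    have : i0 ≠ i1 := by simp [hi0, hi1, Fin.ext_iff]
    exact Pi.single_eq_of_ne this 1
  have hv1 : v i1 = 1 / h := by
    have := congrFun hMv i1
    rw [Matrix.mulVec, dotProduct] at this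
    have hsub : ({i0, i1} : Finset (Fin K)) ⊆ Finset.univ := Finset.subset_univ _
    have hzero : ∀ q ∈ Finset.univ \ ({i0, i1} : Finset (Fin K)), M i1 q * v q = 0 := by
      intro q hq
      simp only [Finset.mem_sdiff, Finset.mem_insert, Finset.mem_singleton] at hq
      have hq0 : (q : ℕ) ≠ 0 := fun hc => hq.2 (Or.inl (Fin.ext hc))
      have hq1 : (q : ℕ) ≠ 1 := fun hc => hq.2 (Or.inr (Fin.ext hc))
      have : ¬ (q : ℕ) ≤ (i1 : ℕ) := by simp [hi1]; omega
      rw [hM]; simp [hq0, this]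
    rw [← Finset.sum_subset hsub (fun q _ hq => hzero q (Finset.mem_sdiff.2 ⟨Finset.mem_univ q, hq⟩))] at this
    have hne : i0 ≠ i1 := by simp [hi0, hi1, Fin.ext_iff]
    rw [Finset.sum_pair hne] at this
    have hM10 : M i1 i0 = 1 := by rw [hM]; simp [hi0]
    have hM11 : M i1 i1 = h := by rw [hM]; simp [hi1]
    rw [hM10, hM11, hv0, one_mul, Pi.single_eq_same] at this
    field_simp
    linarith [this]
  have hinvnorm : 1 / h ≤ ‖Matrix.toEuclideanCLM (𝕜 := ℝ) M⁻¹‖ := by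
    have hMe1' : Matrix.toEuclideanCLM (𝕜 := ℝ) M⁻¹ e1 =
        (WithLp.equiv 2 (Fin K → ℝ)).symm v := by
      rw [he1, hv]
      exact Matrix.toEuclideanCLM_toLp M⁻¹ (Pi.single i1 1)
    have h1 : |v i1| ≤ ‖Matrix.toEuclideanCLM (𝕜 := ℝ) M⁻¹ e1‖ := by
      rw [hMe1']
      exact eucl_coord_le_norm ((WithLp.equiv 2 (Fin K → ℝ)).symm v) i1
    have h2 : ‖Matrix.toEuclideanCLM (𝕜 := ℝ) M⁻¹ e1‖ ≤ ‖Matrix.toEuclideanCLM (𝕜 := ℝ) M⁻¹‖ := by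
      calc ‖Matrix.toEuclideanCLM (𝕜 := ℝ) M⁻¹ e1‖
          ≤ ‖Matrix.toEuclideanCLM (𝕜 := ℝ) M⁻¹‖ * ‖e1‖ :=
            (Matrix.toEuclideanCLM (𝕜 := ℝ) M⁻¹).le_opNorm e1
        _ = _ := by rw [he1norm, mul_one]
    have : |v i1| = 1 / h := by rw [hv1, abs_of_pos (by positivity)]
    linarith
  -- combine
  have key : (h * Real.sqrt S) * (1 / h) ≤
      ‖Matrix.toEuclideanCLM (𝕜 := ℝ) M‖ * ‖Matrix.toEuclideanCLM (𝕜 := ℝ) M⁻¹‖ := by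
    apply mul_le_mul hnormM hinvnorm (by positivity) (le_trans (by positivity) hnormM)
  have : (h * Real.sqrt S) * (1 / h) = Real.sqrt S := by field_simp
  rw [this] at key
  exact key
end

section
/- Let d ≥ 1 and let D : ℝ^d → ℝ be the Cartesian linear box spline. Then D(1, 1, …, 1) = 1 and D(k) = 0 for every k ∈ ℤ^d with k ≠ (1, 1, …, 1). -/
/-- The Cartesian linear box spline on `ℝ^d`:
`D(x) = Σ_{ε ∈ {0,1}^{d+1}} (−1)^{|ε|} max(0, min_{1 ≤ i ≤ d} (x_i − ε_i − ε_{d+1}))`. -/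
noncomputable def boxSplineD (d : ℕ) (x : Fin d → ℝ) : ℝ :=
  ∑ ε : Fin (d + 1) → Fin 2,
    (-1 : ℝ) ^ (∑ i, (ε i : ℕ)) *
      max 0 (⨅ i : Fin d, (x i - ((ε (Fin.castSucc i) : ℕ) : ℝ) - ((ε (Fin.last d) : ℕ) : ℝ)))

private lemma castInf' {d : ℕ} (h : (Finset.univ : Finset (Fin d)).Nonempty) (f : Fin d → ℤ) :
    ⨅ i : Fin d, ((f i : ℝ)) = ((Finset.univ.inf' h f : ℤ) : ℝ) := by
  have : Nonempty (Fin d) := ⟨h.choose⟩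
  apply le_antisymm
  · obtain ⟨i, -, hi⟩ := Finset.exists_mem_eq_inf' h f
    rw [hi]
    exact ciInf_le (Finite.bddBelow_range _) i
  · exact le_ciInf fun j => by exact_mod_cast Finset.inf'_le f (Finset.mem_univ j)

private lemma max_cast_eq_sum {m B : ℤ} (hmB : m ≤ B) :
    max (0:ℝ) (m:ℝ) = ∑ n ∈ Finset.Icc 1 B, (if n ≤ m then (1:ℝ) else 0) := by
  rw [Finset.sum_boole]
  have hfil : Finset.filter (fun n => n ≤ m) (Finset.Icc 1 B) = Finset.Icc 1 m := by
    ext n; simp only [Finset.mem_filter, Finset.mem_Icc]; omega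
  rw [hfil, Int.card_Icc]
  rcases le_or_gt m 0 with h | h
  · have h2 : (m + 1 - 1).toNat = 0 := by omega
    rw [h2]
    have : (m:ℝ) ≤ 0 := by exact_mod_cast h
    simp [max_eq_left this]
  · have h0 : (0:ℝ) ≤ m := by exact_mod_cast h.le
    rw [max_eq_right h0]
    have h2 : (m + 1 - 1).toNat = m.toNat := by omega
    rw [h2]
    exact_mod_cast (Int.toNat_of_nonneg h.le).symm

private lemma tele (F : ℤ → ℝ) (B : ℤ) (hB : 1 ≤ B) :
    ∑ n ∈ Finset.Icc 1 B, (F n - F (n+1)) = F 1 - F (B+1) := by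
  refine Int.le_induction
    (motive := fun B _ => ∑ n ∈ Finset.Icc 1 B, (F n - F (n+1)) = F 1 - F (B+1)) ?_ ?_ B hB
  · norm_num
  · intro b hb ih
    have hins : Finset.Icc (1:ℤ) (b+1) = insert (b+1) (Finset.Icc 1 b) := by
      ext n; simp only [Finset.mem_insert, Finset.mem_Icc]; omega
    rw [hins, Finset.sum_insert (by simp), ih]
    ring

private lemma sum_prod_fin2 {d : ℕ} (g : Fin d → Fin 2 → ℝ) :
    ∑ ε : Fin d → Fin 2, ∏ i, g i (ε i) = ∏ i, ∑ j, g i j := by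
  rw [Finset.prod_univ_sum, Fintype.piFinset_univ]

private lemma inner_sum_eval (d : ℕ) (k : Fin d → ℤ) (n : ℤ) :
    ∑ ε : Fin (d+1) → Fin 2, (-1:ℝ) ^ (∑ i, (ε i : ℕ)) *
        (if ∀ i : Fin d, n + ((ε (Fin.castSucc i) : ℕ) : ℤ) + ((ε (Fin.last d) : ℕ) : ℤ) ≤ k i
          then (1:ℝ) else 0)
    = (if ∀ i, k i = n then (1:ℝ) else 0) - (if ∀ i, k i = n + 1 then (1:ℝ) else 0) := by
  classical
  rw [← (Fin.snocEquiv (fun _ => Fin 2)).sum_comp]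
  rw [Fintype.sum_prod_type]
  have hterm : ∀ (t : Fin 2) (ε' : Fin d → Fin 2),
      (-1:ℝ) ^ (∑ i, ((Fin.snocEquiv (fun _ => Fin 2) (t, ε')) i : ℕ)) *
        (if ∀ i : Fin d,
            n + (((Fin.snocEquiv (fun _ => Fin 2) (t, ε')) (Fin.castSucc i) : ℕ) : ℤ)
              + (((Fin.snocEquiv (fun _ => Fin 2) (t, ε')) (Fin.last d) : ℕ) : ℤ) ≤ k i
          then (1:ℝ) else 0)
      = (-1:ℝ) ^ (t : ℕ) *
          ∏ i : Fin d, ((-1:ℝ) ^ ((ε' i : ℕ)) *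
            (if n + ((ε' i : ℕ) : ℤ) + ((t : ℕ) : ℤ) ≤ k i then (1:ℝ) else 0)) := by
    intro t ε'
    have hs : (Fin.snocEquiv (fun _ : Fin (d+1) => Fin 2) (t, ε')) = Fin.snoc ε' t := rfl
    rw [hs]
    rw [Fin.sum_univ_castSucc]
    simp only [Fin.snoc_castSucc, Fin.snoc_last]
    rw [pow_add, Finset.prod_mul_distrib, Finset.prod_pow_eq_pow_sum, Fintype.prod_boole]
    ring_nf
    simp_rw [add_right_comm n ((t : ℕ) : ℤ)]
  rw [Finset.sum_congr rfl fun t _ => Finset.sum_congr rfl fun ε' _ => hterm t ε']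
  have hinner : ∀ (t : Fin 2),
      ∑ ε' : Fin d → Fin 2, (-1:ℝ) ^ (t : ℕ) *
          ∏ i : Fin d, ((-1:ℝ) ^ ((ε' i : ℕ)) *
            (if n + ((ε' i : ℕ) : ℤ) + ((t : ℕ) : ℤ) ≤ k i then (1:ℝ) else 0))
      = (-1:ℝ) ^ (t : ℕ) * (if ∀ i, k i = n + ((t : ℕ) : ℤ) then (1:ℝ) else 0) := by
    intro t
    rw [← Finset.mul_sum]
    congr 1
    have hps : (∑ ε' : Fin d → Fin 2, ∏ i : Fin d, ((-1:ℝ) ^ ((ε' i : ℕ)) *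
          (if n + ((ε' i : ℕ) : ℤ) + ((t : ℕ) : ℤ) ≤ k i then (1:ℝ) else 0)))
        = ∏ i : Fin d, ∑ j : Fin 2, ((-1:ℝ) ^ ((j : ℕ)) *
          (if n + ((j : ℕ) : ℤ) + ((t : ℕ) : ℤ) ≤ k i then (1:ℝ) else 0)) :=
      sum_prod_fin2 (fun i j => (-1:ℝ) ^ ((j : ℕ)) *
        (if n + ((j : ℕ) : ℤ) + ((t : ℕ) : ℤ) ≤ k i then (1:ℝ) else 0))
    rw [hps]
    have hcol : ∀ i : Fin d,
        (∑ j : Fin 2, (-1:ℝ) ^ ((j : ℕ)) *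
          (if n + ((j : ℕ) : ℤ) + ((t : ℕ) : ℤ) ≤ k i then (1:ℝ) else 0))
        = (if k i = n + ((t : ℕ) : ℤ) then (1:ℝ) else 0) := by
      intro i
      rw [Fin.sum_univ_two]
      simp only [Fin.val_zero, Fin.val_one, pow_zero, pow_one, Nat.cast_zero, Nat.cast_one,
        add_zero, one_mul, neg_one_mul]
      split_ifs <;> (try norm_num) <;> omega
    rw [Finset.prod_congr rfl fun i _ => hcol i, Fintype.prod_boole]
    congr!
  rw [Finset.sum_congr rfl fun t _ => hinner t]
  rw [Fin.sum_univ_two]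
  simp only [Fin.val_zero, Fin.val_one, pow_zero, pow_one, Nat.cast_zero, Nat.cast_one,
    add_zero, one_mul, neg_one_mul]
  split_ifs <;> ring

private lemma boxSpline_int (d : ℕ) (hd : 1 ≤ d) (k : Fin d → ℤ) :
    boxSplineD d (fun i => (k i : ℝ)) = if (∀ i, k i = 1) then 1 else 0 := by
  classical
  have hne : (Finset.univ : Finset (Fin d)).Nonempty := ⟨⟨0, hd⟩, Finset.mem_univ _⟩
  set i0 : Fin d := ⟨0, hd⟩ with hi0
  set B : ℤ := max (k i0) 1 with hBdef
  have hB1 : (1:ℤ) ≤ B := le_max_right _ _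
  have hkB : k i0 ≤ B := le_max_left _ _
  have step1 : boxSplineD d (fun i => (k i : ℝ)) =
      ∑ ε : Fin (d+1) → Fin 2, (-1:ℝ) ^ (∑ i, (ε i : ℕ)) *
        ∑ n ∈ Finset.Icc 1 B,
          (if ∀ i : Fin d, n + ((ε (Fin.castSucc i) : ℕ) : ℤ) + ((ε (Fin.last d) : ℕ) : ℤ) ≤ k i
            then (1:ℝ) else 0) := by
    unfold boxSplineD
    refine Finset.sum_congr rfl fun ε _ => ?_
    congr 1
    set f : Fin d → ℤ := fun i => k i - ((ε (Fin.castSucc i) : ℕ) : ℤ) - ((ε (Fin.last d) : ℕ) : ℤ)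
      with hf
    have hcast : (⨅ i : Fin d, ((k i : ℝ) - ((ε (Fin.castSucc i) : ℕ):ℝ) - ((ε (Fin.last d) : ℕ):ℝ)))
        = ((Finset.univ.inf' hne f : ℤ) : ℝ) := by
      rw [← castInf' hne f]
      congr 1; funext i; push_cast [hf]; ring
    have hfB : Finset.univ.inf' hne f ≤ B := by
      refine le_trans (Finset.inf'_le f (Finset.mem_univ i0)) ?_
      have h1 : (0:ℤ) ≤ ((ε (Fin.castSucc i0) : ℕ) : ℤ) := Int.natCast_nonneg _
      have h2 : (0:ℤ) ≤ ((ε (Fin.last d) : ℕ) : ℤ) := Int.natCast_nonneg _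
      simp only [hf]; omega
    rw [hcast, max_cast_eq_sum hfB]
    refine Finset.sum_congr rfl fun n _ => ?_
    refine if_congr ?_ rfl rfl
    rw [Finset.le_inf'_iff]
    constructor
    · intro h i; have := h i (Finset.mem_univ i); simp only [hf] at this; omega
    · intro h i _; have := h i; simp only [hf]; omega
  rw [step1]
  simp_rw [Finset.mul_sum]
  rw [Finset.sum_comm]
  rw [Finset.sum_congr rfl fun n _ => inner_sum_eval d k n]
  rw [tele (fun n => if ∀ i, k i = n then (1:ℝ) else 0) B hB1]
  have hend : (if ∀ i, k i = B + 1 then (1:ℝ) else 0) = 0 := by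
    rw [if_neg]
    intro h
    have := h i0
    omega
  rw [hend, sub_zero]

/-- the Cartesian linear box spline interpolates the Kronecker delta at the
lattice points, centered at the all-ones point: `D(1,…,1) = 1` and `D(k) = 0` for every other
`k ∈ ℤ^d`. -/
theorem boxSpline_lattice_values (d : ℕ) (hd : 1 ≤ d) :
    boxSplineD d (fun _ => (1 : ℝ)) = 1 ∧
    ∀ k : Fin d → ℤ, k ≠ (fun _ => 1) → boxSplineD d (fun i => (k i : ℝ)) = 0 := by
  constructor
  · have h := boxSpline_int d hd (fun _ => 1)
    simpa using h
  · intro k hk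
    rw [boxSpline_int d hd k, if_neg]
    intro h
    exact hk (funext h)
end

section
/- Let d ≥ 1 and let D : ℝ^d → ℝ be the Cartesian linear box spline. Then for every x ∈ ℝ^d, Σ_{k ∈ ℤ^d} D(x − k) = 1, where the sum has only finitely many nonzero terms. -/
open Finset

namespace BoxSplineAux

noncomputable def clamp (t : ℝ) : ℝ := min 1 (max 0 t)

lemma clamp_mono : Monotone clamp := fun _ _ h =>
  min_le_min le_rfl (max_le_max le_rfl h)

lemma clamp_of_nonpos {t : ℝ} (h : t ≤ 0) : clamp t = 0 := by
  simp [clamp, max_eq_left h]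

lemma clamp_of_one_le {t : ℝ} (h : 1 ≤ t) : clamp t = 1 := by
  have h0 : (0:ℝ) ≤ t := le_trans zero_le_one h
  simp [clamp, max_eq_right h0, min_eq_left h]

lemma clamp_nonneg (t : ℝ) : 0 ≤ clamp t := le_min zero_le_one (le_max_left _ _)

variable {d : ℕ}

lemma exists_argmin [Nonempty (Fin d)] (z : Fin d → ℝ) :
    ∃ i₀, (⨅ i, z i) = z i₀ ∧ ∀ j, z i₀ ≤ z j := by
  obtain ⟨i₀, -, h⟩ := Finset.exists_min_image Finset.univ z ⟨Classical.arbitrary _, mem_univ _⟩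
  exact ⟨i₀, le_antisymm (ciInf_le (Set.Finite.bddBelow (Set.finite_range z)) i₀)
    (le_ciInf fun j => h j (mem_univ _)), fun j => h j (mem_univ _)⟩

lemma map_iInf [Nonempty (Fin d)] {f : ℝ → ℝ} (hf : Monotone f) (z : Fin d → ℝ) :
    f (⨅ i, z i) = ⨅ i, f (z i) := by
  obtain ⟨i₀, h1, h2⟩ := exists_argmin z
  rw [h1]
  exact le_antisymm (le_ciInf fun j => hf (h2 j))
    (ciInf_le (Set.Finite.bddBelow (Set.finite_range _)) i₀)

/-- `Φ z = ⨅ i, clamp (z i)`. -/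
noncomputable def Phi (z : Fin d → ℝ) : ℝ := ⨅ i, clamp (z i)

lemma Phi_eq_zero [Nonempty (Fin d)] {z : Fin d → ℝ} (i₀ : Fin d) (h : z i₀ ≤ 0) :
    Phi z = 0 := by
  refine le_antisymm ?_ (le_ciInf fun j => clamp_nonneg _)
  calc Phi z ≤ clamp (z i₀) := ciInf_le (Set.Finite.bddBelow (Set.finite_range _)) i₀
  _ = 0 := clamp_of_nonpos h

lemma Phi_eq_one [Nonempty (Fin d)] {z : Fin d → ℝ} (h : ∀ i, 1 ≤ z i) : Phi z = 1 := by
  have : (fun i => clamp (z i)) = fun _ => (1:ℝ) := funext fun i => clamp_of_one_le (h i)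
  rw [Phi, this, ciInf_const]

lemma G_eq_Phi [Nonempty (Fin d)] (z : Fin d → ℝ) :
    max 0 (⨅ i, z i) - max 0 (⨅ i, (z i - 1)) = Phi z := by
  have h1 : (⨅ i, (z i - 1)) = (⨅ i, z i) - 1 :=
    (map_iInf (f := fun t => t - 1) (fun a b h => by simpa using h) z).symm
  rw [h1, Phi, ← map_iInf clamp_mono]
  set m := ⨅ i, z i
  rcases le_total m 0 with h | h
  · rw [max_eq_left h, max_eq_left (by linarith), clamp, max_eq_left h]; simp
  · rcases le_total m 1 with h2 | h2
    · rw [max_eq_right h, max_eq_left (by linarith), clamp, max_eq_right h, min_eq_right h2]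
      ring
    · rw [max_eq_right h, max_eq_right (by linarith), clamp, max_eq_right h, min_eq_left h2]
      ring

lemma val_add_val_eq_one {a b : Fin 2} (h : a ≠ b) : (a : ℕ) + (b : ℕ) = 1 := by
  have : (a : ℕ) ≠ (b : ℕ) := fun hv => h (Fin.ext hv)
  have ha := a.isLt
  have hb := b.isLt
  omega

lemma sign_update (ε : Fin d → Fin 2) (i₀ : Fin d) (b : Fin 2) (hb : b ≠ ε i₀) :
    (-1:ℝ) ^ (∑ i, ((Function.update ε i₀ b) i : ℕ)) = -(-1:ℝ) ^ (∑ i, (ε i : ℕ)) := by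
  have hcomp : (fun i => ((Function.update ε i₀ b) i : ℕ))
      = Function.update (fun i => (ε i : ℕ)) i₀ (b : ℕ) := by
    funext i
    by_cases h : i = i₀
    · subst h; simp
    · simp [Function.update_of_ne h]
  rw [hcomp, Finset.sum_update_of_mem (mem_univ i₀),
    show (∑ i, (ε i : ℕ)) = (ε i₀ : ℕ) + ∑ i ∈ univ \ {i₀}, (ε i : ℕ) by
      rw [Finset.sum_eq_sum_sdiff_singleton_add (mem_univ i₀)]; ring]
  have h1 : (b : ℕ) + (ε i₀ : ℕ) = 1 := val_add_val_eq_one hb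
  rcases Nat.le_one_iff_eq_zero_or_eq_one.mp (by omega : (b:ℕ) ≤ 1) with h2 | h2 <;>
    [(have h3 : (ε i₀ : ℕ) = 1 := by omega); (have h3 : (ε i₀ : ℕ) = 0 := by omega)] <;>
    rw [h2, h3] <;> rw [pow_add, pow_add] <;> ring

lemma boxSplineD_eq [Nonempty (Fin d)] (y : Fin d → ℝ) :
    boxSplineD d y =
      ∑ ε : Fin d → Fin 2, (-1 : ℝ) ^ (∑ i, (ε i : ℕ)) * Phi (fun i => y i - (ε i : ℕ)) := by
  rw [boxSplineD, ← Equiv.sum_comp (Fin.snocEquiv (fun _ => Fin 2))]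
  rw [Fintype.sum_prod_type_right]
  refine Finset.sum_congr rfl fun ε _ => ?_
  rw [Fin.sum_univ_two]
  simp only [Fin.snocEquiv_apply, Fin.snoc_castSucc, Fin.snoc_last, Fin.sum_univ_castSucc]
  norm_num [pow_add, pow_succ]
  rw [← mul_neg, ← mul_add, ← sub_eq_add_neg]
  congr 1
  exact G_eq_Phi (fun i => y i - ((ε i : ℕ) : ℝ))
/-- The set of coordinates where the two components of a pair differ. -/
def diffSet (p : (Fin d → Fin 2) × (Fin d → Fin 2)) : Finset (Fin d) :=
  univ.filter (fun i => p.1 i ≠ p.2 i)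

lemma diffSet_nonempty {p : (Fin d → Fin 2) × (Fin d → Fin 2)} (h : p.1 ≠ p.2) :
    (diffSet p).Nonempty := by
  obtain ⟨i, hi⟩ := Function.ne_iff.mp h
  exact ⟨i, by simp [diffSet, hi]⟩

noncomputable def minDiff [Nonempty (Fin d)] (p : (Fin d → Fin 2) × (Fin d → Fin 2)) : Fin d :=
  if h : (diffSet p).Nonempty then (diffSet p).min' h else Classical.arbitrary _

lemma minDiff_spec [Nonempty (Fin d)] {p : (Fin d → Fin 2) × (Fin d → Fin 2)} (h : p.1 ≠ p.2) :
    p.1 (minDiff p) ≠ p.2 (minDiff p) := by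
  have h1 := diffSet_nonempty h
  have := (diffSet p).min'_mem h1
  rw [minDiff, dif_pos h1]
  simpa [diffSet] using this

noncomputable def swapMin [Nonempty (Fin d)] (p : (Fin d → Fin 2) × (Fin d → Fin 2)) :
    (Fin d → Fin 2) × (Fin d → Fin 2) :=
  (Function.update p.1 (minDiff p) (p.2 (minDiff p)),
   Function.update p.2 (minDiff p) (p.1 (minDiff p)))

lemma diffSet_swapMin [Nonempty (Fin d)] (p : (Fin d → Fin 2) × (Fin d → Fin 2)) :
    diffSet (swapMin p) = diffSet p := by
  ext i
  simp only [diffSet, mem_filter, mem_univ, true_and]; simp only [swapMin]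
  by_cases hi : i = minDiff p
  · subst hi; simp [eq_comm]
  · simp [Function.update_of_ne hi]

lemma minDiff_swapMin [Nonempty (Fin d)] (p : (Fin d → Fin 2) × (Fin d → Fin 2)) :
    minDiff (swapMin p) = minDiff p := by
  rw [minDiff, minDiff, diffSet_swapMin]

lemma swapMin_swapMin [Nonempty (Fin d)] (p : (Fin d → Fin 2) × (Fin d → Fin 2)) :
    swapMin (swapMin p) = p := by
  have h1 : minDiff (swapMin p) = minDiff p := minDiff_swapMin p
  refine Prod.ext ?_ ?_
  · show Function.update (swapMin p).1 (minDiff (swapMin p)) ((swapMin p).2 (minDiff (swapMin p)))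
        = p.1
    rw [h1]
    simp [swapMin, Function.update_idem, Function.update_self, Function.update_eq_self]
  · show Function.update (swapMin p).2 (minDiff (swapMin p)) ((swapMin p).1 (minDiff (swapMin p)))
        = p.2
    rw [h1]
    simp [swapMin, Function.update_idem, Function.update_self, Function.update_eq_self]

lemma swapMin_fst_ne_snd [Nonempty (Fin d)] {p : (Fin d → Fin 2) × (Fin d → Fin 2)}
    (h : p.1 ≠ p.2) : (swapMin p).1 ≠ (swapMin p).2 := by
  refine Function.ne_iff.mpr ⟨minDiff p, ?_⟩
  simp only [swapMin, Function.update_self]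
  exact (minDiff_spec h).symm

lemma swapMin_ne_self [Nonempty (Fin d)] {p : (Fin d → Fin 2) × (Fin d → Fin 2)}
    (h : p.1 ≠ p.2) : swapMin p ≠ p := by
  intro hcon
  have : (swapMin p).2 (minDiff p) = p.2 (minDiff p) := by rw [hcon]
  simp only [swapMin, Function.update_self] at this
  exact minDiff_spec h this

/-- Key cancellation: the double alternating sum collapses to the diagonal. -/
lemma key_involution [Nonempty (Fin d)] (F : (Fin d → ℕ) → ℝ) :
    ∑ p : (Fin d → Fin 2) × (Fin d → Fin 2),
        (-1:ℝ) ^ (∑ i, (p.2 i : ℕ)) * F (fun i => (p.1 i : ℕ) + (p.2 i : ℕ))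
      = ∑ η : Fin d → Fin 2, (-1:ℝ) ^ (∑ i, (η i : ℕ)) * F (fun i => 2 * (η i : ℕ)) := by
  classical
  set f : (Fin d → Fin 2) × (Fin d → Fin 2) → ℝ :=
    fun p => (-1:ℝ) ^ (∑ i, (p.2 i : ℕ)) * F (fun i => (p.1 i : ℕ) + (p.2 i : ℕ)) with hf
  rw [← Finset.sum_filter_add_sum_filter_not univ (fun p => p.1 = p.2) f]
  have hoff : ∑ p ∈ univ.filter (fun p : (Fin d → Fin 2) × (Fin d → Fin 2) => ¬ p.1 = p.2),
      f p = 0 := by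
    refine Finset.sum_involution (fun p _ => swapMin p) ?_ ?_ ?_ ?_
    · intro p hp
      have hne : p.1 ≠ p.2 := by simpa using (mem_filter.mp hp).2
      have hσ : (fun i => ((swapMin p).1 i : ℕ) + ((swapMin p).2 i : ℕ))
          = fun i => (p.1 i : ℕ) + (p.2 i : ℕ) := by
        funext i
        by_cases hi : i = minDiff p
        · subst hi; simp [swapMin, Function.update_self]; ring
        · simp [swapMin, Function.update_of_ne hi]
      have hsgn : (-1:ℝ) ^ (∑ i, ((swapMin p).2 i : ℕ)) = -(-1:ℝ) ^ (∑ i, (p.2 i : ℕ)) :=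
        sign_update p.2 (minDiff p) (p.1 (minDiff p)) (minDiff_spec hne)
      simp only [hf, hσ, hsgn]
      ring
    · intro p hp _
      exact swapMin_ne_self (by simpa using (mem_filter.mp hp).2)
    · intro p hp
      simp only [mem_filter, mem_univ, true_and]
      exact swapMin_fst_ne_snd (by simpa using (mem_filter.mp hp).2)
    · intro p _
      exact swapMin_swapMin p
  rw [hoff, add_zero]
  refine Finset.sum_bij' (fun p _ => p.1) (fun η _ => (η, η)) ?_ ?_ ?_ ?_ ?_
  · intro p _; exact mem_univ _
  · intro η _; simp
  · intro p hp
    have : p.1 = p.2 := by simpa using (mem_filter.mp hp).2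
    exact Prod.ext rfl this
  · intro η _; rfl
  · intro p hp
    have h2 : p.2 = p.1 := by simpa using ((mem_filter.mp hp).2).symm
    simp only [hf, h2]
    have h3 : (fun i => (p.1 i : ℕ) + (p.1 i : ℕ)) = fun i => 2 * (p.1 i : ℕ) :=
      funext fun i => (two_mul _).symm
    rw [h3]
lemma val_le_one (c : Fin 2) : (c : ℕ) ≤ 1 := Nat.lt_succ_iff.mp c.isLt

lemma boxSplineD_eq_zero_of_nonpos [Nonempty (Fin d)] {y : Fin d → ℝ} (i₀ : Fin d)
    (h : y i₀ ≤ 0) : boxSplineD d y = 0 := by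
  rw [boxSplineD]
  refine Finset.sum_eq_zero fun ε _ => ?_
  have h1 : (⨅ i : Fin d, (y i - ((ε (Fin.castSucc i) : ℕ) : ℝ)
      - ((ε (Fin.last d) : ℕ) : ℝ))) ≤ 0 := by
    refine le_trans (ciInf_le (Set.Finite.bddBelow (Set.finite_range _)) i₀) ?_
    have a1 : (0:ℝ) ≤ ((ε (Fin.castSucc i₀) : ℕ) : ℝ) := Nat.cast_nonneg _
    have a2 : (0:ℝ) ≤ ((ε (Fin.last d) : ℕ) : ℝ) := Nat.cast_nonneg _
    linarith
  rw [max_eq_left h1, mul_zero]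

lemma boxSplineD_eq_zero_of_ge [Nonempty (Fin d)] {y : Fin d → ℝ} (i₀ : Fin d)
    (h : 2 ≤ y i₀) : boxSplineD d y = 0 := by
  have hflip : ∀ c : Fin 2, (1 - c : Fin 2) ≠ c := by decide
  have hflip2 : ∀ c : Fin 2, (1 - (1 - c) : Fin 2) = c := by decide
  rw [boxSplineD_eq]
  refine Finset.sum_involution (fun ε _ => Function.update ε i₀ (1 - ε i₀)) ?_ ?_ ?_ ?_
  · intro ε _
    have hPhi : Phi (fun i => y i - (((Function.update ε i₀ (1 - ε i₀)) i : ℕ) : ℝ))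
        = Phi (fun i => y i - ((ε i : ℕ) : ℝ)) := by
      rw [Phi, Phi]
      congr 1
      funext i
      by_cases hi : i = i₀
      · subst hi
        rw [Function.update_self]
        have b1 : (((1 - ε i : Fin 2) : ℕ) : ℝ) ≤ 1 := by exact_mod_cast val_le_one _
        have b2 : (((ε i : Fin 2) : ℕ) : ℝ) ≤ 1 := by exact_mod_cast val_le_one _
        rw [clamp_of_one_le (by linarith), clamp_of_one_le (by linarith)]
      · rw [Function.update_of_ne hi]
    rw [hPhi, sign_update ε i₀ _ (hflip _)]
    ring
  · intro ε _ _
    exact Function.ne_iff.mpr ⟨i₀, by simp [hflip]⟩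
  · intro ε _
    exact mem_univ _
  · intro ε _
    simp only [Function.update_self, Function.update_idem, hflip2, Function.update_eq_self]

end BoxSplineAux

/-- the integer shifts of the Cartesian linear box spline form a partition of
unity: for every `x ∈ ℝ^d`, `Σ_{k ∈ ℤ^d} D(x − k) = 1`, the sum having finitely many nonzero
terms. -/
theorem boxSpline_partition_of_unity (d : ℕ) (hd : 1 ≤ d) (x : Fin d → ℝ) :
    {k : Fin d → ℤ | boxSplineD d (fun i => x i - (k i : ℝ)) ≠ 0}.Finite ∧
    ∑ᶠ k : Fin d → ℤ, boxSplineD d (fun i => x i - (k i : ℝ)) = 1 := by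
  classical
  haveI : Nonempty (Fin d) := ⟨⟨0, hd⟩⟩
  set f : (Fin d → ℤ) → ℝ := fun k => boxSplineD d (fun i => x i - (k i : ℝ)) with hfdef
  set a : Fin d → ℤ := fun i => ⌈x i⌉ - 2 with hadef
  set φ : (Fin d → Fin 2) → (Fin d → ℤ) := fun κ i => a i + ((κ i : ℕ) : ℤ) with hφdef
  set T : Finset (Fin d → ℤ) := Finset.image φ univ with hTdef
  have hsupp : Function.support f ⊆ ↑T := by
    intro k hk
    have hub : ∀ i, (k i : ℝ) < x i := by
      intro i
      by_contra hcon
      push_neg at hcon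
      refine hk (BoxSplineAux.boxSplineD_eq_zero_of_nonpos i ?_)
      show x i - (k i : ℝ) ≤ 0
      linarith
    have hlb : ∀ i, x i - 2 < (k i : ℝ) := by
      intro i
      by_contra hcon
      push_neg at hcon
      refine hk (BoxSplineAux.boxSplineD_eq_zero_of_ge i ?_)
      show (2:ℝ) ≤ x i - (k i : ℝ)
      linarith
    have h1 : ∀ i, k i ≤ ⌈x i⌉ - 1 := by
      intro i
      have := Int.lt_ceil.mpr (hub i)
      omega
    have h2 : ∀ i, ⌈x i⌉ - 2 ≤ k i := by
      intro i
      have : ⌈x i⌉ ≤ k i + 2 := Int.ceil_le.mpr (by push_cast; linarith [hlb i])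
      omega
    refine Finset.mem_coe.mpr (Finset.mem_image.mpr
      ⟨fun i => if k i = a i then 0 else 1, mem_univ _, ?_⟩)
    funext i
    by_cases hc : k i = a i
    · simp [hφdef, hc]
    · have hk1 : k i = a i + 1 := by
        have e1 := h1 i
        have e2 := h2 i
        simp only [hadef] at hc ⊢
        omega
      simp [hφdef, hk1]
  have hfin : {k : Fin d → ℤ | f k ≠ 0}.Finite :=
    Set.Finite.subset T.finite_toSet hsupp
  refine ⟨hfin, ?_⟩
  rw [finsum_eq_sum_of_support_subset f hsupp]
  have hinj : ∀ κ ∈ univ, ∀ κ' ∈ univ, φ κ = φ κ' → κ = κ' := by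
    intro κ _ κ' _ hφeq
    funext i
    have := congrFun hφeq i
    simp only [hφdef] at this
    have hval : ((κ i : ℕ) : ℤ) = ((κ' i : ℕ) : ℤ) := by omega
    exact Fin.ext (by exact_mod_cast hval)
  rw [hTdef, Finset.sum_image hinj]
  have hrw : ∀ κ : Fin d → Fin 2, f (φ κ)
      = ∑ ε : Fin d → Fin 2, (-1:ℝ) ^ (∑ i, (ε i : ℕ)) *
          BoxSplineAux.Phi (fun i => x i - ((a i : ℤ) : ℝ)
            - (((κ i : ℕ) + (ε i : ℕ) : ℕ) : ℝ)) := by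
    intro κ
    rw [hfdef]
    simp only
    rw [BoxSplineAux.boxSplineD_eq]
    refine Finset.sum_congr rfl fun ε _ => ?_
    have harg : (fun i => (x i - ((φ κ i : ℤ) : ℝ)) - ((ε i : ℕ) : ℝ))
        = fun i => x i - ((a i : ℤ) : ℝ) - (((κ i : ℕ) + (ε i : ℕ) : ℕ) : ℝ) := by
      funext i
      simp only [hφdef]
      push_cast
      ring
    rw [harg]
  simp only [hrw]
  have hkey := BoxSplineAux.key_involution
    (fun σ : Fin d → ℕ => BoxSplineAux.Phi (fun i => x i - ((a i : ℤ) : ℝ) - ((σ i : ℕ) : ℝ)))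
  rw [Fintype.sum_prod_type] at hkey
  dsimp only at hkey
  rw [hkey]
  -- evaluate the diagonal sum
  have hzero_terms : ∀ η : Fin d → Fin 2, η ∈ univ → η ≠ (fun _ => (0 : Fin 2)) →
      (-1:ℝ) ^ (∑ i, (η i : ℕ)) *
        BoxSplineAux.Phi (fun i => x i - ((a i : ℤ) : ℝ) - ((2 * (η i : ℕ) : ℕ) : ℝ)) = 0 := by
    intro η _ hη
    obtain ⟨i₀, hi₀⟩ := Function.ne_iff.mp hη
    have hval : (η i₀ : ℕ) = 1 := by
      have := BoxSplineAux.val_le_one (η i₀)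
      have hne : (η i₀ : ℕ) ≠ 0 := fun hc => hi₀ (Fin.ext (by simpa using hc))
      omega
    have hzero : BoxSplineAux.Phi
        (fun i => x i - ((a i : ℤ) : ℝ) - ((2 * (η i : ℕ) : ℕ) : ℝ)) = 0 := by
      refine BoxSplineAux.Phi_eq_zero i₀ ?_
      show x i₀ - ((a i₀ : ℤ) : ℝ) - ((2 * (η i₀ : ℕ) : ℕ) : ℝ) ≤ 0
      rw [hval]
      have := Int.le_ceil (x i₀)
      simp only [hadef]
      push_cast
      linarith
    rw [hzero, mul_zero]
  rw [Finset.sum_eq_single_of_mem (fun _ => (0 : Fin 2)) (mem_univ _) hzero_terms]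
  norm_num
  refine BoxSplineAux.Phi_eq_one fun i => ?_
  have := Int.ceil_lt_add_one (x i)
  simp only [hadef]
  push_cast
  linarith
end

section
/- Let d ≥ 1 and let D : ℝ^d → ℝ be the Cartesian linear box spline. Then D(x) = 0 for every x outside the zonotope Z = { t_1 e_1 + ⋯ + t_d e_d + t_{d+1}·(1,…,1) : t ∈ [0,1]^{d+1} }, i.e., the support of D is contained in Z. -/
open Finset

lemma bs_id1 (c a : ℝ) :
    max 0 (min c a) - max 0 (min c (a-1)) = max 0 (min c a - max 0 (a-1)) := by
  simp only [min_def, max_def]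
  split_ifs <;> linarith

lemma bs_id2 (c a m M : ℝ) :
    max 0 (min (min c a) m - max 0 (M-1)) - max 0 (min (min c (a-1)) m - max 0 (M-1))
      = max 0 (min c (min a m) - max 0 (max a M - 1)) := by
  have hP0 : (0:ℝ) ≤ max 0 (M-1) := le_max_left _ _
  set P := max 0 (M-1) with hP
  have hY : min (min c (a-1)) m = min (min (min c a) m) (a-1) := by
    simp only [min_def]; split_ifs <;> linarith
  have hQ : max 0 (max a M - 1) = max (max 0 (a-1)) P := by
    rw [hP]; simp only [max_def]; split_ifs <;> linarith
  rw [hY, hQ, ← min_assoc]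
  set X := min (min c a) m with hX
  rcases le_total (a-1) 0 with h|h
  · have h4 : max 0 (min X (a-1) - P) = 0 :=
      max_eq_left (by have : min X (a-1) ≤ a - 1 := min_le_right _ _; linarith)
    rw [h4, max_eq_left h, max_eq_right hP0, sub_zero]
  · rw [max_eq_right h]
    rcases le_total X (a-1) with h2|h2
    · have h4 : max 0 (X - max (a-1) P) = 0 :=
        max_eq_left (by have := le_max_left (a-1) P; linarith)
      rw [min_eq_left h2, sub_self, h4]
    · rw [min_eq_right h2]
      rcases le_total (a-1) P with h3|h3
      · have h4 : max 0 (a - 1 - P) = 0 := max_eq_left (by linarith)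
        rw [max_eq_right h3, h4, sub_zero]
      · have h4 : max 0 (a - 1 - P) = a - 1 - P := max_eq_right (by linarith)
        rw [max_eq_left h3, h4, max_eq_right (by linarith : (0:ℝ) ≤ X - P),
          max_eq_right (by linarith : (0:ℝ) ≤ X - (a-1))]
        ring

lemma bs_key {ι : Type*} [DecidableEq ι] (y : ι → ℝ) (S : Finset ι) (hS : S.Nonempty) :
    ∀ c : ℝ,
    ∑ T ∈ S.powerset, (-1:ℝ)^T.card *
        max 0 (min c (S.inf' hS (fun i => y i - (if i ∈ T then 1 else 0))))
      = max 0 (min c (S.inf' hS y) - max 0 (S.sup' hS y - 1)) := by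
  induction hS using Finset.Nonempty.cons_induction with
  | singleton a =>
    intro c
    have hpow : ({a} : Finset ι).powerset = {∅, {a}} := by
      ext T; simp [Finset.subset_singleton_iff]
    rw [hpow, Finset.sum_pair (Ne.symm (Finset.singleton_ne_empty a))]
    simp only [Finset.card_empty, pow_zero, one_mul, Finset.card_singleton, pow_one,
      Finset.inf'_singleton, Finset.sup'_singleton, Finset.notMem_empty, if_false, ↓reduceIte,
      Finset.mem_singleton, if_pos rfl, sub_zero, neg_one_mul]
    rw [← sub_eq_add_neg]
    exact bs_id1 c (y a)
  | cons a s ha hs ih =>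
    intro c
    simp only [Finset.cons_eq_insert]
    rw [Finset.sum_powerset_insert ha]
    have step1 : ∀ T ∈ s.powerset,
        (-1:ℝ)^T.card *
          max 0 (min c ((insert a s).inf' (insert_nonempty a s)
            (fun i => y i - (if i ∈ T then 1 else 0))))
        = (-1:ℝ)^T.card *
          max 0 (min (min c (y a)) (s.inf' hs (fun i => y i - (if i ∈ T then 1 else 0)))) := by
      intro T hT
      have haT : a ∉ T := fun h => ha (Finset.mem_powerset.1 hT h)
      rw [Finset.inf'_insert (H := hs), if_neg haT, sub_zero, min_assoc]
    have step2 : ∀ T ∈ s.powerset,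
        (-1:ℝ)^(insert a T).card *
          max 0 (min c ((insert a s).inf' (insert_nonempty a s)
            (fun i => y i - (if i ∈ insert a T then 1 else 0))))
        = -((-1:ℝ)^T.card *
          max 0 (min (min c (y a - 1)) (s.inf' hs (fun i => y i - (if i ∈ T then 1 else 0))))) := by
      intro T hT
      have haT : a ∉ T := fun h => ha (Finset.mem_powerset.1 hT h)
      have hcard : (insert a T).card = T.card + 1 := Finset.card_insert_of_notMem haT
      have hfun : s.inf' hs (fun i => y i - (if i ∈ insert a T then 1 else 0))
          = s.inf' hs (fun i => y i - (if i ∈ T then 1 else 0)) := by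
        refine Finset.inf'_congr hs rfl (fun i hi => ?_)
        have : i ≠ a := fun h => ha (h ▸ hi)
        simp [Finset.mem_insert, this]
      rw [Finset.inf'_insert (H := hs), if_pos (Finset.mem_insert_self a T), hfun,
        min_assoc, hcard, pow_succ]
      ring
    rw [Finset.sum_congr rfl step1, Finset.sum_congr rfl step2, Finset.sum_neg_distrib,
      ih (min c (y a)), ih (min c (y a - 1)),
      Finset.inf'_insert (H := hs), Finset.sup'_insert (H := hs)]
    rw [← sub_eq_add_neg]
    exact bs_id2 c (y a) (s.inf' hs y) (s.sup' hs y)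

lemma bs_fin2_nat (v : Fin 2) : (v : ℕ) = if v = 1 then 1 else 0 := by
  fin_cases v <;> simp

lemma bs_fin2_real (v : Fin 2) : ((v : ℕ) : ℝ) = if v = 1 then 1 else 0 := by
  fin_cases v <;> simp

/-- Functions `Fin d → Fin 2` correspond to subsets of `Fin d`. -/
def bsEquiv (d : ℕ) : (Fin d → Fin 2) ≃ Finset (Fin d) where
  toFun ε := univ.filter fun i => ε i = 1
  invFun T := fun i => if i ∈ T then 1 else 0
  left_inv ε := by
    funext i
    simp only [Finset.mem_filter, Finset.mem_univ, true_and]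
    by_cases h : ε i = 1
    · simp [h]
    · have h0 : ε i = 0 := by omega
      simp [h, h0]
  right_inv T := by
    ext i
    simp only [Finset.mem_filter, Finset.mem_univ, true_and]
    by_cases h : i ∈ T <;> simp [h]

lemma bs_inner (d : ℕ) [Nonempty (Fin d)] (y : Fin d → ℝ) (c : ℝ) :
    ∑ ε : Fin d → Fin 2, (-1:ℝ)^(∑ i, (ε i : ℕ)) *
      max 0 (min c (univ.inf' univ_nonempty (fun i => y i - ((ε i : ℕ) : ℝ))))
    = max 0 (min c (univ.inf' univ_nonempty y) - max 0 (univ.sup' univ_nonempty y - 1)) := by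
  have hk := bs_key y univ univ_nonempty c
  rw [Finset.powerset_univ] at hk
  rw [← hk]
  apply Fintype.sum_equiv (bsEquiv d)
  intro ε
  have hcard : (∑ i, (ε i : ℕ)) = (bsEquiv d ε).card := by
    rw [show bsEquiv d ε = univ.filter fun i => ε i = 1 from rfl, Finset.card_filter]
    exact Finset.sum_congr rfl fun i _ => bs_fin2_nat (ε i)
  have hfun : (fun i => y i - ((ε i : ℕ) : ℝ))
      = fun i => y i - (if i ∈ bsEquiv d ε then 1 else 0) := by
    funext i
    rw [show bsEquiv d ε = univ.filter fun i => ε i = 1 from rfl]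
    simp only [Finset.mem_filter, Finset.mem_univ, true_and]
    rw [bs_fin2_real (ε i)]
  rw [hcard, hfun]

lemma bs_inner2 (d : ℕ) [Nonempty (Fin d)] (y : Fin d → ℝ) :
    ∑ ε : Fin d → Fin 2, (-1:ℝ)^(∑ i, (ε i : ℕ)) *
      max 0 (univ.inf' univ_nonempty (fun i => y i - ((ε i : ℕ) : ℝ)))
    = max 0 (univ.inf' univ_nonempty y - max 0 (univ.sup' univ_nonempty y - 1)) := by
  have h := bs_inner d y (univ.inf' univ_nonempty y)
  rw [min_self] at h
  rw [← h]
  apply Finset.sum_congr rfl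
  intro ε _
  congr 2
  refine (min_eq_right ?_).symm
  apply Finset.le_inf'
  intro i hi
  refine le_trans (Finset.inf'_le _ hi) ?_
  have : (0:ℝ) ≤ ((ε i : ℕ) : ℝ) := by positivity
  linarith [Finset.inf'_le (fun i => y i - ((ε i : ℕ) : ℝ)) hi]

lemma bs_inf'_sub (d : ℕ) [Nonempty (Fin d)] (f : Fin d → ℝ) (c : ℝ) :
    univ.inf' univ_nonempty (fun i => f i - c) = univ.inf' univ_nonempty f - c := by
  apply le_antisymm
  · obtain ⟨i, hi, hEq⟩ := Finset.exists_mem_eq_inf' univ_nonempty f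
    rw [hEq]
    exact Finset.inf'_le _ hi
  · exact Finset.le_inf' _ _ fun i hi => sub_le_sub_right (Finset.inf'_le _ hi) c

lemma bs_sup'_sub (d : ℕ) [Nonempty (Fin d)] (f : Fin d → ℝ) (c : ℝ) :
    univ.sup' univ_nonempty (fun i => f i - c) = univ.sup' univ_nonempty f - c := by
  apply le_antisymm
  · exact Finset.sup'_le _ _ fun i hi => sub_le_sub_right (Finset.le_sup' _ hi) c
  · obtain ⟨i, hi, hEq⟩ := Finset.exists_mem_eq_sup' univ_nonempty f
    rw [hEq]
    exact Finset.le_sup' (fun i => f i - c) hi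

lemma bs_ne (d : ℕ) (hd : 1 ≤ d) : (univ : Finset (Fin d)).Nonempty :=
  ⟨⟨0, hd⟩, Finset.mem_univ _⟩

lemma bs_formula (d : ℕ) (hd : 1 ≤ d) (x : Fin d → ℝ) :
    boxSplineD d x =
      max 0 (univ.inf' (bs_ne d hd) x
          - max 0 (univ.sup' (bs_ne d hd) x - 1))
        - max 0 ((univ.inf' (bs_ne d hd) x - 1)
          - max 0 ((univ.sup' (bs_ne d hd) x - 1) - 1)) := by
  haveI : Nonempty (Fin d) := ⟨⟨0, hd⟩⟩
  unfold boxSplineD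
  rw [← Equiv.sum_comp (Fin.snocEquiv (fun _ => Fin 2))]
  have hterm : ∀ p : Fin 2 × (Fin d → Fin 2),
      (fun ε : Fin (d+1) → Fin 2 => (-1 : ℝ) ^ (∑ i, (ε i : ℕ)) *
        max 0 (⨅ i : Fin d, (x i - ((ε (Fin.castSucc i) : ℕ) : ℝ) - ((ε (Fin.last d) : ℕ) : ℝ))))
        (Fin.snocEquiv (fun _ => Fin 2) p)
      = (-1:ℝ)^((p.1 : ℕ)) * ((-1:ℝ)^(∑ i, (p.2 i : ℕ)) *
          max 0 (univ.inf' univ_nonempty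
            (fun i => (x i - ((p.1 : ℕ) : ℝ)) - ((p.2 i : ℕ) : ℝ)))) := by
    intro p
    simp only [Fin.snocEquiv_apply, Fin.snoc_castSucc, Fin.snoc_last]
    rw [Fin.sum_univ_castSucc]
    simp only [Fin.snoc_castSucc, Fin.snoc_last]
    rw [show (⨅ i : Fin d, (x i - ((p.2 i : ℕ) : ℝ) - ((p.1 : ℕ) : ℝ)))
        = ⨅ i : Fin d, ((x i - ((p.1 : ℕ) : ℝ)) - ((p.2 i : ℕ) : ℝ)) from by
      congr 1; funext i; ring]
    rw [← Finset.inf'_univ_eq_ciInf, pow_add]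
    ring
  rw [Finset.sum_congr rfl (fun p _ => hterm p)]
  rw [Fintype.sum_prod_type, Fin.sum_univ_two]
  simp only [Fin.val_zero, Fin.val_one, pow_zero, pow_one, one_mul, neg_one_mul,
    Nat.cast_zero, Nat.cast_one, sub_zero]
  rw [Finset.sum_neg_distrib, bs_inner2 d x, bs_inner2 d (fun i => x i - 1),
    bs_inf'_sub, bs_sup'_sub]
  have h1 : univ.inf' univ_nonempty x = univ.inf' (bs_ne d hd) x := rfl
  have h2 : univ.sup' univ_nonempty x = univ.sup' (bs_ne d hd) x := rfl
  rw [h1, h2]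
  ring

/-- the Cartesian linear box spline vanishes outside the zonotope spanned by
`e_1, …, e_d` and `(1,…,1)`, i.e. its support is contained in the Minkowski sum of the
segments `[0,e_1], …, [0,e_d], [0,(1,…,1)]`. -/
theorem boxSpline_support_subset_zonotope (d : ℕ) (hd : 1 ≤ d) (x : Fin d → ℝ)
    (hx : x ∉ {z : Fin d → ℝ | ∃ t : Fin (d + 1) → ℝ,
      (∀ i, t i ∈ Set.Icc (0 : ℝ) 1) ∧
      z = (∑ i : Fin d, t (Fin.castSucc i) • (Pi.single i (1 : ℝ) : Fin d → ℝ)) +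
            t (Fin.last d) • (fun _ => (1 : ℝ))}) :
    boxSplineD d x = 0 := by
  haveI : Nonempty (Fin d) := ⟨⟨0, hd⟩⟩
  set m := univ.inf' (bs_ne d hd) x with hm
  set M := univ.sup' (bs_ne d hd) x with hM
  have hcases : m < 0 ∨ m + 1 < M ∨ 2 < M := by
    by_contra h
    push_neg at h
    obtain ⟨h1, h2, h3⟩ := h
    apply hx
    set s := max 0 (M - 1) with hs
    have hs0 : 0 ≤ s := le_max_left _ _
    have hs2 : M - 1 ≤ s := le_max_right _ _
    have hs1 : s ≤ 1 := max_le (by norm_num) (by linarith)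
    have hsm : s ≤ m := max_le h1 (by linarith)
    refine ⟨Fin.snoc (fun i => x i - s) s, ?_, ?_⟩
    · intro i
      refine Fin.lastCases ?_ ?_ i
      · rw [Fin.snoc_last]
        exact ⟨hs0, hs1⟩
      · intro j
        rw [Fin.snoc_castSucc]
        have hxj1 : m ≤ x j := Finset.inf'_le x (Finset.mem_univ j)
        have hxj2 : x j ≤ M := Finset.le_sup' x (Finset.mem_univ j)
        exact ⟨by linarith, by linarith⟩
    · funext j
      simp only [Pi.add_apply, Finset.sum_apply, Pi.smul_apply, Pi.single_apply, smul_eq_mul,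
        Fin.snoc_castSucc, Fin.snoc_last, mul_ite, mul_one, mul_zero]
      rw [Finset.sum_ite_eq Finset.univ j (fun i => x i - s)]
      simp
  rw [bs_formula d hd x, ← hm, ← hM]
  have hmax1 : (0:ℝ) ≤ max 0 (M - 1) := le_max_left _ _
  have hmax1' : M - 1 ≤ max 0 (M - 1) := le_max_right _ _
  have hmax2 : (0:ℝ) ≤ max 0 (M - 1 - 1) := le_max_left _ _
  have hmax2' : M - 1 - 1 ≤ max 0 (M - 1 - 1) := le_max_right _ _
  rcases hcases with h | h | h
  · have e1 : max 0 (m - max 0 (M - 1)) = 0 := max_eq_left (by linarith)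
    have e2 : max 0 (m - 1 - max 0 (M - 1 - 1)) = 0 := max_eq_left (by linarith)
    rw [e1, e2, sub_self]
  · have e1 : max 0 (m - max 0 (M - 1)) = 0 := max_eq_left (by linarith)
    have e2 : max 0 (m - 1 - max 0 (M - 1 - 1)) = 0 := max_eq_left (by linarith)
    rw [e1, e2, sub_self]
  · have e1 : max 0 (M - 1) = M - 1 := max_eq_right (by linarith)
    have e2 : max 0 (M - 1 - 1) = M - 1 - 1 := max_eq_right (by linarith)
    rw [e1, e2, show m - 1 - (M - 1 - 1) = m - (M - 1) from by ring, sub_self]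
end

section
/- Let d ≥ 1 and let D : ℝ^d → ℝ be the Cartesian linear box spline. Then D(x) ≥ 0 for every x ∈ ℝ^d. -/
open Finset


private lemma inf'_congr_set {β α : Type*} [SemilatticeInf α] {s t : Finset β} (h : s = t)
    (hs : s.Nonempty) (ht : t.Nonempty) (f : β → α) : s.inf' hs f = t.inf' ht f := by subst h; rfl

private lemma sup'_congr_set {β α : Type*} [SemilatticeSup α] {s t : Finset β} (h : s = t)
    (hs : s.Nonempty) (ht : t.Nonempty) (f : β → α) : s.sup' hs f = t.sup' ht f := by subst h; rfl

private lemma sum_snoc_split {n : ℕ} (F : (Fin (n + 1) → Fin 2) → ℝ) :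
    ∑ ε, F ε = ∑ ε' : Fin n → Fin 2, (F (Fin.snoc ε' 0) + F (Fin.snoc ε' 1)) := by
  rw [← Equiv.sum_comp (Fin.snocEquiv fun _ => Fin 2) F, Fintype.sum_prod_type_right]
  simp [Fin.sum_univ_two, Fin.snocEquiv]

private lemma inf'_castSucc {n : ℕ} (hn : 0 < n) (f : Fin (n + 1) → ℝ) :
    Finset.univ.inf' ⟨Fin.last n, mem_univ _⟩ f =
      min (Finset.univ.inf' ⟨⟨0, hn⟩, mem_univ _⟩ fun i => f (Fin.castSucc i)) (f (Fin.last n)) := by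
  haveI : Nonempty (Fin n) := ⟨⟨0, hn⟩⟩
  erw [inf'_congr_set (Fin.univ_castSuccEmb n) _ (Finset.cons_nonempty _) f,
    Finset.inf'_cons, Finset.inf'_map]
  · simp [min_comm, Fin.castSuccEmb, Fin.castSucc, Fin.castAdd]
  · simp [Finset.map_nonempty]

private lemma sup'_castSucc {n : ℕ} (hn : 0 < n) (f : Fin (n + 1) → ℝ) :
    Finset.univ.sup' ⟨Fin.last n, mem_univ _⟩ f =
      max (Finset.univ.sup' ⟨⟨0, hn⟩, mem_univ _⟩ fun i => f (Fin.castSucc i)) (f (Fin.last n)) := by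
  haveI : Nonempty (Fin n) := ⟨⟨0, hn⟩⟩
  erw [sup'_congr_set (Fin.univ_castSuccEmb n) _ (Finset.cons_nonempty _) f,
    Finset.sup'_cons, Finset.sup'_map]
  · simp [max_comm, Fin.castSuccEmb, Fin.castSucc, Fin.castAdd]
  · simp [Finset.map_nonempty]


private lemma maxmin_key (b t s : ℝ) :
    max 0 (min b t - s) = max 0 (b - s) - max 0 (b - max s t) := by
  simp only [max_def, min_def]
  split_ifs <;> linarith

private lemma step_scalar (a b t s : ℝ) :
    max 0 (b - max (a - 1) (max s (t - 1))) - max 0 (b - max (a - 1) (max s t)) =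
      max 0 (min b t - max (max a t - 1) s) := by
  have h1 : max (a - 1) (max s t) = max (max (a - 1) (max s (t - 1))) t := by
    simp only [max_def]; split_ifs <;> linarith
  have h2 : max (max a t - 1) s = max (a - 1) (max s (t - 1)) := by
    simp only [max_def]; split_ifs <;> linarith
  rw [h1, h2, ← maxmin_key]

private lemma base_scalar (y s : ℝ) :
    max 0 (y - s) - max 0 (y - 1 - s) = max 0 (y - max (y - 1) s) := by
  simp only [max_def]
  split_ifs <;> linarith

private lemma inf'_sub_const {β : Type*} (s : Finset β) (H : s.Nonempty) (f : β → ℝ) (c : ℝ) :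
    (s.inf' H fun i => f i - c) = s.inf' H f - c := by
  have := Finset.apply_inf'_eq_inf'_comp (γ := ℝ) H (f := f) (fun y => y - c)
    (fun x y => by simp only [min_def]; split_ifs <;> linarith)
  simpa [Function.comp] using this.symm

private lemma inf'_fin1 (f : Fin (0+1) → ℝ) (H : (univ : Finset (Fin (0+1))).Nonempty) :
    univ.inf' H f = f (Fin.last 0) :=
  le_antisymm (Finset.inf'_le _ (mem_univ _))
    (Finset.le_inf' _ _ fun i _ => le_of_eq (congrArg f (Fin.ext (by omega))))

private lemma sup'_fin1 (f : Fin (0+1) → ℝ) (H : (univ : Finset (Fin (0+1))).Nonempty) :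
    univ.sup' H f = f (Fin.last 0) :=
  le_antisymm (Finset.sup'_le _ _ fun i _ => le_of_eq (congrArg f (Fin.ext (by omega))))
    (Finset.le_sup' _ (mem_univ _))

private noncomputable def Gsum (d : ℕ) (hd : 0 < d) (x : Fin d → ℝ) (s : ℝ) : ℝ :=
  ∑ ε : Fin d → Fin 2, (-1 : ℝ) ^ (∑ i, (ε i : ℕ)) *
    max 0 (Finset.univ.inf' ⟨⟨0, hd⟩, Finset.mem_univ _⟩ (fun i => x i - ((ε i : ℕ) : ℝ)) - s)

private lemma Gsum_eq (d : ℕ) : ∀ (hd : 0 < d) (x : Fin d → ℝ) (s : ℝ),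
    Gsum d hd x s = max 0 (Finset.univ.inf' ⟨⟨0, hd⟩, Finset.mem_univ _⟩ x -
      max (Finset.univ.sup' ⟨⟨0, hd⟩, Finset.mem_univ _⟩ x - 1) s) := by
  induction d with
  | zero => omega
  | succ n ih =>
    intro hd x s
    rcases Nat.eq_zero_or_pos n with h0 | hn
    · subst h0
      unfold Gsum
      rw [sum_snoc_split]
      simp only [Finset.univ_unique, Finset.sum_singleton, Fin.sum_univ_one,
        Fin.sum_univ_castSucc, Fin.sum_univ_zero, zero_add, Finset.sum_empty, Fin.snoc_last,
        Finset.inf'_singleton, Finset.sup'_singleton]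
      simp only [show (default : Fin 1) = Fin.last 0 from rfl, Fin.snoc_last, Fin.val_zero,
        Fin.val_one, pow_zero, pow_one, one_mul, neg_one_mul, Nat.cast_zero, Nat.cast_one,
        sub_zero]
      rw [← sub_eq_add_neg]
      erw [inf'_fin1, inf'_fin1, sup'_fin1]
      simp only [Fin.snoc_last, Fin.val_zero, Fin.val_one,
        Nat.cast_zero, Nat.cast_one, sub_zero]
      exact base_scalar _ _
    · have key : ∀ (ε' : Fin n → Fin 2) (j : Fin 2),
          (-1 : ℝ) ^ (∑ i : Fin (n + 1), ((Fin.snoc ε' j : Fin (n + 1) → Fin 2) i : ℕ)) *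
            max 0 (Finset.univ.inf' ⟨⟨0, hd⟩, Finset.mem_univ _⟩
              (fun i => x i - (((Fin.snoc ε' j : Fin (n + 1) → Fin 2) i : ℕ) : ℝ)) - s)
          = (-1 : ℝ) ^ (∑ i, (ε' i : ℕ)) * ((-1 : ℝ) ^ (j : ℕ) *
              max 0 (min (Finset.univ.inf' ⟨⟨0, hn⟩, Finset.mem_univ _⟩
                  fun i => x (Fin.castSucc i) - ((ε' i : ℕ) : ℝ))
                (x (Fin.last n) - ((j : ℕ) : ℝ)) - s)) := by
        intro ε' j
        rw [Fin.sum_univ_castSucc, inf'_castSucc hn]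
        simp only [Fin.snoc_castSucc, Fin.snoc_last]
        rw [pow_add, mul_assoc]
      unfold Gsum
      rw [sum_snoc_split]
      rw [Finset.sum_congr rfl fun ε' _ => by rw [key ε' 0, key ε' 1]]
      have expand : ∀ ε' : Fin n → Fin 2,
          ((-1 : ℝ) ^ (∑ i, (ε' i : ℕ)) *
              ((-1 : ℝ) ^ ((0 : Fin 2) : ℕ) *
                max 0 (min (Finset.univ.inf' ⟨⟨0, hn⟩, Finset.mem_univ _⟩
                    fun i => x (Fin.castSucc i) - ((ε' i : ℕ) : ℝ))
                  (x (Fin.last n) - (((0 : Fin 2) : ℕ) : ℝ)) - s)) +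
            (-1 : ℝ) ^ (∑ i, (ε' i : ℕ)) *
              ((-1 : ℝ) ^ ((1 : Fin 2) : ℕ) *
                max 0 (min (Finset.univ.inf' ⟨⟨0, hn⟩, Finset.mem_univ _⟩
                    fun i => x (Fin.castSucc i) - ((ε' i : ℕ) : ℝ))
                  (x (Fin.last n) - (((1 : Fin 2) : ℕ) : ℝ)) - s)))
          = (-1 : ℝ) ^ (∑ i, (ε' i : ℕ)) *
              max 0 ((Finset.univ.inf' ⟨⟨0, hn⟩, Finset.mem_univ _⟩
                  fun i => x (Fin.castSucc i) - ((ε' i : ℕ) : ℝ)) - max s (x (Fin.last n) - 1))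
            - (-1 : ℝ) ^ (∑ i, (ε' i : ℕ)) *
              max 0 ((Finset.univ.inf' ⟨⟨0, hn⟩, Finset.mem_univ _⟩
                  fun i => x (Fin.castSucc i) - ((ε' i : ℕ) : ℝ)) - max s (x (Fin.last n))) := by
        intro ε'
        rw [maxmin_key, maxmin_key]
        norm_num
        ring
      rw [Finset.sum_congr rfl fun ε' _ => expand ε', Finset.sum_sub_distrib]
      have e1 : (∑ ε' : Fin n → Fin 2, (-1 : ℝ) ^ (∑ i, (ε' i : ℕ)) *
            max 0 ((Finset.univ.inf' ⟨⟨0, hn⟩, Finset.mem_univ _⟩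
                fun i => x (Fin.castSucc i) - ((ε' i : ℕ) : ℝ)) - max s (x (Fin.last n) - 1)))
          = Gsum n hn (fun i => x (Fin.castSucc i)) (max s (x (Fin.last n) - 1)) := rfl
      have e2 : (∑ ε' : Fin n → Fin 2, (-1 : ℝ) ^ (∑ i, (ε' i : ℕ)) *
            max 0 ((Finset.univ.inf' ⟨⟨0, hn⟩, Finset.mem_univ _⟩
                fun i => x (Fin.castSucc i) - ((ε' i : ℕ) : ℝ)) - max s (x (Fin.last n))))
          = Gsum n hn (fun i => x (Fin.castSucc i)) (max s (x (Fin.last n))) := rfl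
      rw [e1, e2, ih hn, ih hn, inf'_castSucc hn x, sup'_castSucc hn x]
      have hms : max s (x (Fin.last n)) = max s (x (Fin.last n) - 1 + 1) := by norm_num
      exact step_scalar _ _ _ _


/-- the Cartesian linear box spline is nonnegative. -/
theorem boxSpline_nonneg (d : ℕ) (hd : 1 ≤ d) (x : Fin d → ℝ) :
    0 ≤ boxSplineD d x := by
  haveI : Nonempty (Fin d) := ⟨⟨0, hd⟩⟩
  have hb : boxSplineD d x = Gsum d hd x 0 - Gsum d hd x 1 := by
    unfold boxSplineD Gsum
    rw [sum_snoc_split, ← Finset.sum_sub_distrib]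
    refine Finset.sum_congr rfl fun ε' _ => ?_
    have hiInf : ∀ j : Fin 2,
        (⨅ i : Fin d, (x i - (((Fin.snoc ε' j : Fin (d + 1) → Fin 2) (Fin.castSucc i) : ℕ) : ℝ)
            - (((Fin.snoc ε' j : Fin (d + 1) → Fin 2) (Fin.last d) : ℕ) : ℝ)))
          = Finset.univ.inf' ⟨⟨0, hd⟩, Finset.mem_univ _⟩
              (fun i => x i - ((ε' i : ℕ) : ℝ)) - ((j : ℕ) : ℝ) := by
      intro j
      rw [← Finset.inf'_univ_eq_ciInf]
      simp only [Fin.snoc_castSucc, Fin.snoc_last]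
      rw [inf'_sub_const]
    rw [hiInf 0, hiInf 1]
    simp only [Fin.sum_univ_castSucc, Fin.snoc_castSucc, Fin.snoc_last, Fin.val_zero,
      Fin.val_one, Nat.cast_zero, Nat.cast_one, add_zero, sub_zero, pow_add, pow_one,
      pow_zero, mul_one]
    ring
  rw [hb, Gsum_eq, Gsum_eq]
  rw [sub_nonneg]
  refine max_le_max le_rfl (sub_le_sub_left (max_le_max le_rfl ?_) _)
  exact zero_le_one
end
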